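/- arXiv:2012.05121 — 9 statements merged into one kernel-verified Lean document; each statement's English description precedes it below -/
import Mathlib

section
/- Let p > 3 be a prime and let n be a positive integer. Then (pn)^2 divides T_{pn} − T_n in the p-adic sense, i.e., the p-adic valuation of the integer T_{pn} − T_n is at least 2 + 2ν_p(n), where ν_p(n) is the p-adic valuation of n. -/
/-- The central trinomial coefficient: the coefficient of `x^n` in `(x^2+x+1)^n`. -/
def centralTrinomial (n : ℕ) : ℕ :=
  ∑ k ∈ Finset.range (n / 2 + 1), Nat.choose n (2 * k) * Nat.choose (2 * k) k

section PolyLemmas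

open Polynomial Finset

lemma coeff_one_add_X_sq_pow (k j : ℕ) :
    ((1 + X^2 : ℤ[X])^k).coeff j = if 2 ∣ j then (k.choose (j/2) : ℤ) else 0 := by
  rw [add_comm, add_pow]
  simp only [one_pow, mul_one, ← pow_mul, finset_sum_coeff]
  have hterm : ∀ i : ℕ, ((X^(2*i) * ((k.choose i : ℕ) : ℤ[X])).coeff j)
      = if 2*i = j then (k.choose i : ℤ) else 0 := by
    intro i
    rw [← C_eq_natCast, mul_comm, coeff_C_mul, coeff_X_pow]
    by_cases h : 2*i = j <;> simp [h] <;> omega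
  simp only [hterm]
  by_cases h2 : 2 ∣ j
  · obtain ⟨t, rfl⟩ := h2
    have : ∀ i : ℕ, (2*i = 2*t) ↔ i = t := by intro i; omega
    simp only [this, if_pos (dvd_mul_right 2 t)]
    rw [Finset.sum_ite_eq' (Finset.range (k+1)) t (fun i => (k.choose i : ℤ))]
    by_cases ht : t ∈ Finset.range (k+1)
    · simp [ht, Nat.mul_div_cancel_left t (by norm_num : 0 < 2)]
    · simp only [ht, if_false]
      rw [Nat.mul_div_cancel_left t (by norm_num : 0 < 2)]
      rw [Nat.choose_eq_zero_of_lt (by simpa using ht)]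
      simp
  · have : ∀ i : ℕ, ¬ (2*i = j) := by intro i hi; exact h2 ⟨i, by omega⟩
    simp [this, h2]

lemma coeff_trinomial_pow (n : ℕ) :
    ((1 + X + X^2 : ℤ[X])^n).coeff n = (centralTrinomial n : ℤ) := by
  have : (1 + X + X^2 : ℤ[X]) = X + (1 + X^2) := by ring
  rw [this, add_pow]
  simp only [finset_sum_coeff]
  have hterm : ∀ j ∈ Finset.range (n+1), ((X^j * (1+X^2)^(n-j) * ((n.choose j : ℕ) : ℤ[X])).coeff n)
      = (n.choose j : ℤ) * (if 2 ∣ (n-j) then ((n-j).choose ((n-j)/2) : ℤ) else 0) := by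
    intro j hj
    have hrw : (X^j * (1+X^2)^(n-j) * ((n.choose j : ℕ) : ℤ[X])) =
        C ((n.choose j : ℤ)) * (X^j * (1+X^2)^(n-j)) := by
      rw [C_eq_natCast]; push_cast; ring
    have hn' : n = (n - j) + j := by
      have := Finset.mem_range.mp hj; omega
    rw [hrw, coeff_C_mul, hn', coeff_X_pow_mul, coeff_one_add_X_sq_pow]
    simp
  rw [Finset.sum_congr rfl hterm]
  set f : ℕ → ℤ := fun j => (n.choose j : ℤ) *
    (if 2 ∣ (n-j) then ((n-j).choose ((n-j)/2) : ℤ) else 0) with hf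
  have hinj : Set.InjOn (fun k => n - 2*k) (Finset.range (n/2+1)) := by
    intro a ha b hb hab
    simp only [Finset.coe_range, Set.mem_Iio, Finset.mem_coe, Finset.mem_range] at ha hb
    simp only at hab
    omega
  have himg : ∑ j ∈ Finset.range (n+1), f j = ∑ k ∈ Finset.range (n/2+1), f (n - 2*k) := by
    rw [← Finset.sum_image (f := f) (g := fun k => n - 2*k)
      (fun a ha b hb => hinj (by simpa using ha) (by simpa using hb))]
    apply (Finset.sum_subset ?_ ?_).symm
    · intro j hj
      simp only [Finset.mem_image, Finset.mem_range] at hj ⊢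
      obtain ⟨k, hk, rfl⟩ := hj
      omega
    · intro j hj hnj
      simp only [Finset.mem_image, Finset.mem_range] at hj hnj
      rw [hf]
      have : ¬ (2 ∣ (n - j)) := by
        intro ⟨t, ht⟩
        exact hnj ⟨t, by omega, by omega⟩
      simp [this]
  rw [himg, centralTrinomial]
  push_cast
  apply Finset.sum_congr rfl
  intro k hk
  have hk' : 2*k ≤ n := by
    simp only [Finset.mem_range] at hk; omega
  rw [hf]
  have h1 : n - (n - 2*k) = 2*k := by omega
  have h2 : 2 ∣ n - (n - 2*k) := by omega
  simp only [h1, h2, if_true]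
  rw [Nat.choose_symm hk']
  have : 2*k/2 = k := by omega
  rw [this]
  rw [if_pos ⟨k, by ring⟩]


end PolyLemmas

section PSLemmas

open PowerSeries Finset

variable {K : Type*} [Field K] [CharZero K]

omit [CharZero K] in
lemma coeff_pow_eq_zero' {f : K⟦X⟧} (hf : constantCoeff f = 0) {j l : ℕ} (h : l < j) :
    coeff l (f^j) = 0 := by
  obtain ⟨g, rfl⟩ := (PowerSeries.X_dvd_iff).mpr hf
  rw [mul_pow, PowerSeries.coeff_X_pow_mul']
  simp [Nat.not_le_of_lt h]

noncomputable def myexp (f : K⟦X⟧) : K⟦X⟧ :=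
  PowerSeries.mk fun l => ∑ j ∈ Finset.range (l+1), (coeff l (f^j)) / (j.factorial : K)

omit [CharZero K] in
lemma coeff_myexp (f : K⟦X⟧) (l : ℕ) :
    coeff l (myexp f) = ∑ j ∈ Finset.range (l+1), (coeff l (f^j)) / (j.factorial : K) := by
  simp [myexp, coeff_mk]

omit [CharZero K] in
lemma coeff_myexp_ext {f : K⟦X⟧} (hf : constantCoeff f = 0) (l : ℕ) {L : ℕ} (hL : l < L) :
    coeff l (myexp f) = ∑ j ∈ Finset.range L, (coeff l (f^j)) / (j.factorial : K) := by
  rw [coeff_myexp]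
  apply Finset.sum_subset
  · intro j hj; simp only [Finset.mem_range] at *; omega
  · intro j hj hj2
    simp only [Finset.mem_range] at hj hj2
    rw [coeff_pow_eq_zero' hf (by omega)]
    simp

omit [CharZero K] in
lemma constantCoeff_myexp {f : K⟦X⟧} (hf : constantCoeff f = 0) :
    constantCoeff (myexp f) = 1 := by
  rw [← coeff_zero_eq_constantCoeff, coeff_myexp]
  simp

lemma derivative_myexp {f : K⟦X⟧} (hf : constantCoeff f = 0) :
    d⁄dX K (myexp f) = (d⁄dX K f) * myexp f := by
  ext l
  have lhs1 : coeff l (d⁄dX K (myexp f))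
      = ∑ j ∈ Finset.range (l+2), (coeff (l+1) (f^j)) / (j.factorial : K) * ((l:K)+1) := by
    rw [PowerSeries.coeff_derivative, coeff_myexp_ext hf (l+1) (by omega : l + 1 < l + 2),
      Finset.sum_mul]
  have step1 : ∀ j : ℕ, (coeff (l+1) (f^j)) / (j.factorial : K) * ((l:K)+1)
      = (j : K) * coeff l (f^(j-1) * d⁄dX K f) / (j.factorial : K) := by
    intro j
    have h1 : coeff (l+1) (f^j) * ((l:K)+1) = coeff l (d⁄dX K (f^j)) := by
      rw [PowerSeries.coeff_derivative]
    rw [div_mul_eq_mul_div, h1, Derivation.leibniz_pow, map_nsmul, nsmul_eq_mul, smul_eq_mul]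
  have lhs2 : coeff l (d⁄dX K (myexp f))
      = ∑ i ∈ Finset.range (l+1), coeff l (f^i * d⁄dX K f) / (i.factorial : K) := by
    rw [lhs1, Finset.sum_congr rfl (fun j _ => step1 j), Finset.sum_range_succ']
    simp only [Nat.cast_zero, zero_mul, zero_div, add_zero]
    apply Finset.sum_congr rfl
    intro i _
    have hred : i + 1 - 1 = i := rfl
    rw [hred, Nat.factorial_succ]
    have h1 : ((i:K)+1) ≠ 0 := Nat.cast_add_one_ne_zero i
    have h2 : ((i.factorial : ℕ) : K) ≠ 0 := Nat.cast_ne_zero.mpr (Nat.factorial_ne_zero i)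
    push_cast
    field_simp
  have rhs1 : coeff l ((d⁄dX K f) * myexp f)
      = ∑ j ∈ Finset.range (l+1), coeff l ((d⁄dX K f) * f^j) / (j.factorial : K) := by
    rw [PowerSeries.coeff_mul]
    have hq : ∀ q ∈ Finset.HasAntidiagonal.antidiagonal l,
        coeff q.1 (d⁄dX K f) * coeff q.2 (myexp f)
        = ∑ j ∈ Finset.range (l+1), coeff q.1 (d⁄dX K f) * (coeff q.2 (f^j) / (j.factorial : K)) := by
      intro q hq
      have hq2 : q.2 < l + 1 := by
        have h2 := Finset.HasAntidiagonal.antidiagonal.snd_le hq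
        omega
      rw [coeff_myexp_ext hf q.2 hq2, Finset.mul_sum]
    rw [Finset.sum_congr rfl hq, Finset.sum_comm]
    apply Finset.sum_congr rfl
    intro j _
    rw [PowerSeries.coeff_mul, Finset.sum_div]
    apply Finset.sum_congr rfl
    intro q _
    rw [mul_div_assoc]
  rw [lhs2, rhs1]
  apply Finset.sum_congr rfl
  intro i _
  rw [mul_comm (f^i) _]



lemma eq_of_cross_deriv {F G : K⟦X⟧} (hG : constantCoeff G ≠ 0)
    (hc : constantCoeff F = constantCoeff G)
    (hD : (d⁄dX K F) * G = (d⁄dX K G) * F) : F = G := by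
  have hGinv : G⁻¹ * G = 1 := PowerSeries.inv_mul_cancel G hG
  have key : F * G⁻¹ = 1 := by
    apply PowerSeries.derivative.ext
    · rw [Derivation.leibniz, PowerSeries.derivative_inv', show d⁄dX K (1:K⟦X⟧) = 0 from Derivation.map_one_eq_zero _]
      have : F • (-G⁻¹ ^ 2 * d⁄dX K G) + G⁻¹ • d⁄dX K F
          = (G⁻¹ ^ 2) * ((d⁄dX K F) * G - (d⁄dX K G) * F) := by
        rw [smul_eq_mul, smul_eq_mul]
        have : G⁻¹ = G⁻¹ ^ 2 * G := by
          rw [pow_two, mul_assoc, hGinv, mul_one]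
        nth_rewrite 2 [this]
        ring
      rw [this, hD, sub_self, mul_zero]
    · rw [map_mul, PowerSeries.constantCoeff_inv, hc, map_one]
      exact mul_inv_cancel₀ hG
  calc F = F * (G⁻¹ * G) := by rw [hGinv, mul_one]
    _ = (F * G⁻¹) * G := by ring
    _ = G := by rw [key, one_mul]



noncomputable def Sgeo (K : Type*) [Field K] (d : ℕ) : K⟦X⟧ :=
  PowerSeries.mk fun l => if d ∣ (l+1) then 1 else 0

lemma geo_mul (d : ℕ) (hd : 0 < d) :
    (1 - X^d) * Sgeo K d = (X:K⟦X⟧)^(d-1) := by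
  ext l
  rw [sub_mul, one_mul, map_sub, PowerSeries.coeff_X_pow_mul', PowerSeries.coeff_X_pow]
  simp only [Sgeo, coeff_mk]
  by_cases hl : l = d - 1
  · subst hl
    have hd1 : d - 1 + 1 = d := by omega
    rw [hd1, if_pos dvd_rfl, if_neg (by omega), if_pos rfl, sub_zero]
  · rw [if_neg hl]
    by_cases hdl : d ≤ l
    · rw [if_pos hdl]
      have hiff : d ∣ (l+1) ↔ d ∣ (l - d + 1) := by
        constructor
        · rintro ⟨t, ht⟩
          rcases t with _ | s
          · omega
          · rw [Nat.mul_succ] at ht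
            exact ⟨s, by omega⟩
        · rintro ⟨t, ht⟩
          exact ⟨t+1, by rw [Nat.mul_succ]; omega⟩
      by_cases h2 : d ∣ (l+1)
      · rw [if_pos h2, if_pos (hiff.mp h2), sub_self]
      · rw [if_neg h2, if_neg (fun h => h2 (hiff.mpr h)), sub_zero]
    · rw [if_neg hdl, sub_zero]
      have : ¬ d ∣ (l+1) := by
        intro h
        have := Nat.le_of_dvd (by omega) h
        omega
      rw [if_neg this]

/-- coefficients of the logarithmic derivative series `W'`. -/
noncomputable def Wd (K : Type*) [Field K] (p : ℕ) : K⟦X⟧ :=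
  PowerSeries.mk fun l => if p ∣ (l+1) then 0 else (if 3 ∣ (l+1) then (-2:K) else 1)

lemma Wd_eq (p : ℕ) (hp : Nat.Coprime 3 p) :
    Wd K p = Sgeo K 1 - (PowerSeries.C (R := K) 3) * Sgeo K 3 - Sgeo K p
      + (PowerSeries.C (R := K) 3) * Sgeo K (3*p) := by
  ext l
  simp only [Wd, Sgeo, map_add, map_sub, PowerSeries.coeff_C_mul, coeff_mk]
  have h1 : (1:ℕ) ∣ (l+1) := one_dvd _
  have h3p : (3*p ∣ (l+1)) ↔ (3 ∣ (l+1) ∧ p ∣ (l+1)) := by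
    constructor
    · intro h
      exact ⟨dvd_trans (dvd_mul_right 3 p) h, dvd_trans (dvd_mul_left p 3) h⟩
    · rintro ⟨ha, hb⟩
      exact hp.mul_dvd_of_dvd_of_dvd ha hb
  by_cases hpl : p ∣ (l+1) <;> by_cases h3l : 3 ∣ (l+1) <;>
    simp [hpl, h3l, h3p, h1] <;> ring

/-- The series `W` with `W' = Wd`. -/
noncomputable def Wser (K : Type*) [Field K] (p : ℕ) : K⟦X⟧ :=
  PowerSeries.mk fun m => if p ∣ m ∨ m = 0 then 0
    else (if 3 ∣ m then (-2:K) else 1) / (m:K)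

lemma constantCoeff_Wser (p : ℕ) : constantCoeff (Wser K p) = 0 := by
  rw [← coeff_zero_eq_constantCoeff]
  simp [Wser, coeff_mk]

lemma derivative_Wser (p : ℕ) : d⁄dX K (Wser K p) = Wd K p := by
  ext l
  rw [PowerSeries.coeff_derivative]
  simp only [Wser, Wd, coeff_mk]
  by_cases hpl : p ∣ (l+1)
  · simp [hpl]
  · have hne : ¬ (p ∣ (l+1) ∨ (l+1) = 0) := by
      rintro (h | h)
      · exact hpl h
      · omega
    rw [if_neg hne, if_neg hpl]
    have hl1 : ((l+1 : ℕ) : K) ≠ 0 := Nat.cast_ne_zero.mpr (by omega)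
    push_cast at hl1 ⊢
    field_simp

lemma nonzero_of_constantCoeff_one {f : K⟦X⟧} (h : constantCoeff f = 1) : f ≠ 0 := by
  intro h0
  rw [h0, map_zero] at h
  exact one_ne_zero h.symm

lemma star_identity (p : ℕ) (hp0 : 0 < p) (hcop : Nat.Coprime 3 p) :
    (p:K⟦X⟧) * (d⁄dX K (1 + X + X^2) * (1 + X^p + (X^p)^2))
      - (d⁄dX K (1 + X^p + (X^p)^2)) * (1 + X + X^2)
    = (p:K⟦X⟧) * ((1 + X + X^2) * (1 + X^p + (X^p)^2) * Wd K p) := by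
  set A : K⟦X⟧ := 1 + X + X^2 with hA
  set Ap : K⟦X⟧ := 1 + X^p + (X^p)^2 with hAp
  -- derivatives
  have hD1 : d⁄dX K (1 : K⟦X⟧) = 0 := Derivation.map_one_eq_zero _
  have hDX2 : d⁄dX K ((X:K⟦X⟧)^2) = 2*X := by
    rw [pow_two, Derivation.leibniz, PowerSeries.derivative_X]
    simp only [smul_eq_mul]
    ring
  have hDA : d⁄dX K A = 1 + 2*X := by
    rw [hA, map_add, map_add, hD1, PowerSeries.derivative_X, hDX2]
    ring
  have hDXp : d⁄dX K ((X:K⟦X⟧)^p) = (p:K⟦X⟧) * X^(p-1) := by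
    rw [Derivation.leibniz_pow, PowerSeries.derivative_X, nsmul_eq_mul, smul_eq_mul, mul_one]
  have hDAp : d⁄dX K Ap = (p:K⟦X⟧) * X^(p-1) + 2*(X^p)*((p:K⟦X⟧) * X^(p-1)) := by
    rw [hAp, map_add, map_add, hD1, hDXp, pow_two, Derivation.leibniz, hDXp]
    simp only [smul_eq_mul]
    ring
  -- cancel the factor X * (1-X) * (1-X^p)
  have hXne : (X:K⟦X⟧) ≠ 0 := PowerSeries.X_ne_zero
  have h1Xne : (1 - X : K⟦X⟧) ≠ 0 := by
    apply nonzero_of_constantCoeff_one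
    simp
  have h1Xpne : (1 - X^p : K⟦X⟧) ≠ 0 := by
    apply nonzero_of_constantCoeff_one
    rw [map_sub, map_one, ← coeff_zero_eq_constantCoeff, PowerSeries.coeff_X_pow]
    rw [if_neg (by omega : ¬ (0 = p))]
    simp
  have hcancel : (X:K⟦X⟧) * (1-X) * (1-X^p) ≠ 0 :=
    mul_ne_zero (mul_ne_zero hXne h1Xne) h1Xpne
  apply mul_left_cancel₀ hcancel
  -- key polynomial relation:  X * X^(p-1) = X^p
  have hXXp : (X:K⟦X⟧) * X^(p-1) = X^p := by
    rw [← pow_succ']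
    congr 1
    omega
  -- geometric lemmas
  have g1 : (1 - X) * Sgeo K 1 = 1 := by
    have := geo_mul (K := K) 1 one_pos
    simpa using this
  have g3 : (1 - X) * A * Sgeo K 3 = X^2 := by
    have h13 : ((1:K⟦X⟧) - X^3) * Sgeo K 3 = X^2 := by
      have := geo_mul (K := K) 3 (by norm_num)
      simpa using this
    rw [← h13]
    rw [hA]
    ring
  have gp : (X:K⟦X⟧) * ((1 - X^p) * Sgeo K p) = X^p := by
    rw [geo_mul p hp0, hXXp]
  have g3p : (X:K⟦X⟧) * ((1 - X^p) * Ap * Sgeo K (3*p)) = (X^p)^3 := by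
    have hfac : ((1:K⟦X⟧) - X^p) * Ap = 1 - (X^p)^3 := by rw [hAp]; ring
    have hpow : ((X:K⟦X⟧)^p)^3 = X^(3*p) := by rw [← pow_mul, mul_comm]
    have h3p : ((1:K⟦X⟧) - X^(3*p)) * Sgeo K (3*p) = X^(3*p - 1) := by
      exact geo_mul (3*p) (by omega)
    rw [hfac, hpow, h3p]
    rw [← pow_succ']
    congr 1
    omega
  -- expand Wd
  rw [Wd_eq p hcop, map_ofNat]
  rw [hDA, hDAp]
  -- move to a form where the geometric identities apply
  calc (X:K⟦X⟧) * (1-X) * (1-X^p) *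
        ((p:K⟦X⟧) * ((1 + 2*X) * Ap) - ((p:K⟦X⟧) * X^(p-1) + 2*(X^p)*((p:K⟦X⟧) * X^(p-1))) * A)
      = (p:K⟦X⟧) * ((1-X)*(1-X^p)) * ((X * (1+2*X) * Ap) - ((X * X^(p-1)) * (1 + 2*(X^p)) * A)) := by
        ring
    _ = (p:K⟦X⟧) * ((1-X)*(1-X^p)) * ((X * (1+2*X) * Ap) - (X^p * (1 + 2*(X^p)) * A)) := by
        rw [hXXp]
    _ = (p:K⟦X⟧) * ((X * (1-X) * (1-X^p) * (A * Ap * (Sgeo K 1 - 3 * Sgeo K 3 - Sgeo K p + 3 * Sgeo K (3*p))))) := by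
        have e1 : (X:K⟦X⟧) * (1-X) * (1-X^p) * (A * Ap * Sgeo K 1)
            = X * (1-X^p) * A * Ap * ((1-X) * Sgeo K 1) := by ring
        have e3 : (X:K⟦X⟧) * (1-X) * (1-X^p) * (A * Ap * (3 * Sgeo K 3))
            = 3 * (X * (1-X^p) * Ap) * ((1-X) * A * Sgeo K 3) := by ring
        have ep : (X:K⟦X⟧) * (1-X) * (1-X^p) * (A * Ap * Sgeo K p)
            = (1-X) * A * Ap * (X * ((1 - X^p) * Sgeo K p)) := by ring
        have e3p : (X:K⟦X⟧) * (1-X) * (1-X^p) * (A * Ap * (3 * Sgeo K (3*p)))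
            = 3 * ((1-X) * A) * (X * ((1 - X^p) * Ap * Sgeo K (3*p))) := by ring
        have expand : (X:K⟦X⟧) * (1-X) * (1-X^p) * (A * Ap * (Sgeo K 1 - 3 * Sgeo K 3 - Sgeo K p + 3 * Sgeo K (3*p)))
            = X * (1-X^p) * A * Ap * ((1-X) * Sgeo K 1)
              - 3 * (X * (1-X^p) * Ap) * ((1-X) * A * Sgeo K 3)
              - (1-X) * A * Ap * (X * ((1 - X^p) * Sgeo K p))
              + 3 * ((1-X) * A) * (X * ((1 - X^p) * Ap * Sgeo K (3*p))) := by
          rw [← e1, ← e3, ← ep, ← e3p]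
          ring
        rw [expand, g1, g3, gp, g3p, mul_one, hA, hAp]
        ring
    _ = (X:K⟦X⟧) * (1-X) * (1-X^p) * ((p:K⟦X⟧) * (A * Ap * (Sgeo K 1 - 3 * Sgeo K 3 - Sgeo K p + 3 * Sgeo K (3*p)))) := by
        ring

lemma main_identity (p n : ℕ) (hp0 : 0 < p) (hn : 0 < n) (hcop : Nat.Coprime 3 p) :
    (1 + X + X^2 : K⟦X⟧)^(p*n)
      = (1 + X^p + (X^p)^2 : K⟦X⟧)^n
          * myexp (PowerSeries.C (R := K) ((p*n : ℕ) : K) * Wser K p) := by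
  set c : K := ((p*n : ℕ) : K) with hc
  set W : K⟦X⟧ := PowerSeries.C (R := K) c * Wser K p with hW
  set E : K⟦X⟧ := myexp W with hE
  set A : K⟦X⟧ := 1 + X + X^2 with hA
  set Ap : K⟦X⟧ := 1 + X^p + (X^p)^2 with hAp
  have hWc : constantCoeff W = 0 := by
    rw [hW, map_mul, constantCoeff_Wser, mul_zero]
  have hDW : d⁄dX K W = PowerSeries.C (R := K) c * Wd K p := by
    rw [hW, Derivation.leibniz, PowerSeries.derivative_C, derivative_Wser]
    simp only [smul_eq_mul, smul_zero, mul_zero]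
    ring
  have hDE : d⁄dX K E = (PowerSeries.C (R := K) c * Wd K p) * E := by
    rw [hE, derivative_myexp hWc, hDW]
  have hcE : constantCoeff E = 1 := constantCoeff_myexp hWc
  have hcA : constantCoeff A = 1 := by
    rw [hA, map_add, map_add, map_one, constantCoeff_X, map_pow, constantCoeff_X]
    norm_num
  have hcAp : constantCoeff Ap = 1 := by
    rw [hAp]
    simp [hp0.ne']
  have hstar := star_identity (K := K) p hp0 hcop
  rw [← hA, ← hAp] at hstar
  apply eq_of_cross_deriv
  · rw [map_mul, map_pow, hcAp, hcE, one_pow, one_mul]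
    exact one_ne_zero
  · rw [map_pow, map_mul, map_pow, hcA, hcAp, hcE, one_pow, one_pow, one_mul]
  · -- derivative condition
    rw [Derivation.leibniz_pow, Derivation.leibniz, Derivation.leibniz_pow, hDE]
    simp only [smul_eq_mul, nsmul_eq_mul]
    have hA1 : A^(p*n) = A^(p*n - 1) * A := by
      rw [← pow_succ]
      congr 1
      have := Nat.mul_pos hp0 hn
      omega
    have hAp1 : Ap^n = Ap^(n-1) * Ap := by
      rw [← pow_succ]
      congr 1
      omega
    rw [hA1, hAp1, hc, map_natCast, Nat.cast_mul]
    linear_combination ((n:K⟦X⟧) * A^(p*n-1) * Ap^(n-1) * E) * hstar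



noncomputable def castPS (K : Type*) [Field K] : ℤ⟦X⟧ →+* K⟦X⟧ :=
  PowerSeries.map (Int.castRingHom K)

lemma castPS_poly_trinomial :
    castPS K ((((1 + Polynomial.X + Polynomial.X^2 : Polynomial ℤ)) : ℤ⟦X⟧))
      = (1 + X + X^2 : K⟦X⟧) := by
  rw [Polynomial.coe_add, Polynomial.coe_add, Polynomial.coe_one, Polynomial.coe_pow,
    Polynomial.coe_X]
  rw [castPS, map_add, map_add, map_one, map_pow, PowerSeries.map_X]

lemma castPS_poly_trinomial_expand (p : ℕ) :
    castPS K (((Polynomial.expand ℤ p (1 + Polynomial.X + Polynomial.X^2 : Polynomial ℤ)) : ℤ⟦X⟧))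
      = (1 + X^p + (X^p)^2 : K⟦X⟧) := by
  rw [map_add, map_add, map_one, map_pow, Polynomial.expand_X]
  rw [Polynomial.coe_add, Polynomial.coe_add, Polynomial.coe_one, Polynomial.coe_pow,
    Polynomial.coe_pow, Polynomial.coe_X]
  rw [castPS, map_add, map_add, map_one, map_pow, map_pow, PowerSeries.map_X,
    Polynomial.coe_pow, Polynomial.coe_X, map_pow, PowerSeries.map_X]

lemma coeff_castPS (f : ℤ⟦X⟧) (k : ℕ) :
    coeff k (castPS K f) = ((coeff k f : ℤ) : K) := by
  rw [castPS, PowerSeries.coeff_map]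
  rfl

lemma coeff_A_pow (n k : ℕ) :
    coeff k ((1 + X + X^2 : K⟦X⟧)^n)
      = ((((1 + Polynomial.X + Polynomial.X^2 : Polynomial ℤ)^n).coeff k : ℤ) : K) := by
  rw [← castPS_poly_trinomial, ← map_pow, ← Polynomial.coe_pow, coeff_castPS,
    Polynomial.coeff_coe]

lemma coeff_Ap_pow (p : ℕ) (hp0 : 0 < p) (n i : ℕ) :
    coeff i ((1 + X^p + (X^p)^2 : K⟦X⟧)^n)
      = if p ∣ i then ((((1 + Polynomial.X + Polynomial.X^2 : Polynomial ℤ)^n).coeff (i/p) : ℤ) : K)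
        else 0 := by
  rw [← castPS_poly_trinomial_expand, ← map_pow, ← Polynomial.coe_pow, ← map_pow,
    coeff_castPS, Polynomial.coeff_coe, Polynomial.coeff_expand hp0]
  split_ifs <;> simp

section Padic

variable {p : ℕ} [hp : Fact p.Prime]

lemma padic_norm_sum_le {ι : Type*} (s : Finset ι) (f : ι → ℚ_[p]) {C : ℝ} (hC : 0 ≤ C)
    (h : ∀ i ∈ s, ‖f i‖ ≤ C) : ‖∑ i ∈ s, f i‖ ≤ C := by
  classical
  induction s using Finset.induction_on with
  | empty => simpa using hC
  | @insert a s' ha ih =>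
    rw [Finset.sum_insert ha]
    refine le_trans (Padic.nonarchimedean _ _) (max_le ?_ ?_)
    · exact h a (Finset.mem_insert_self a s')
    · exact ih (fun i hi => h i (Finset.mem_insert_of_mem hi))

lemma norm_coeff_Wser_le (m : ℕ) : ‖coeff m (Wser ℚ_[p] p)‖ ≤ 1 := by
  rw [Wser, coeff_mk]
  have hm : ¬ (p ∣ m ∨ m = 0) → ‖(m : ℚ_[p])‖ = 1 := by
    intro h1
    push_neg at h1
    have hle : ‖((m:ℤ) : ℚ_[p])‖ ≤ 1 := Padic.norm_int_le_one _
    have hlt : ¬ ‖((m:ℤ) : ℚ_[p])‖ < 1 := by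
      rw [Padic.norm_intCast_lt_one_iff]
      exact_mod_cast h1.1
    push_cast at hle hlt ⊢
    linarith
  split_ifs with h1 h3
  · simp
  · rw [norm_div, hm h1, div_one]
    have : ((-2 : ℤ) : ℚ_[p]) = (-2 : ℚ_[p]) := by push_cast; ring
    rw [← this]
    exact Padic.norm_int_le_one _
  · rw [norm_div, hm h1, div_one, norm_one]

lemma norm_coeff_mul_le_one {f g : ℚ_[p]⟦X⟧} (hf : ∀ m, ‖coeff m f‖ ≤ 1)
    (hg : ∀ m, ‖coeff m g‖ ≤ 1) (m : ℕ) : ‖coeff m (f * g)‖ ≤ 1 := by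
  rw [PowerSeries.coeff_mul]
  apply padic_norm_sum_le _ _ zero_le_one
  intro q _
  rw [norm_mul]
  calc ‖coeff q.1 f‖ * ‖coeff q.2 g‖ ≤ 1 * 1 :=
        mul_le_mul (hf q.1) (hg q.2) (norm_nonneg _) zero_le_one
    _ = 1 := by norm_num

lemma norm_coeff_pow_Wser_le (j m : ℕ) : ‖coeff m ((Wser ℚ_[p] p)^j)‖ ≤ 1 := by
  induction j generalizing m with
  | zero =>
    rw [pow_zero, PowerSeries.coeff_one]
    split_ifs <;> simp
  | succ j ih =>
    rw [pow_succ]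
    exact norm_coeff_mul_le_one (fun m' => ih m') norm_coeff_Wser_le m

lemma norm_factorial_padic (j : ℕ) :
    ‖((j.factorial : ℕ) : ℚ_[p])‖ = (p:ℝ)^(-(padicValNat p j.factorial : ℤ)) := by
  have hne : ((j.factorial : ℕ) : ℚ) ≠ 0 := by
    exact_mod_cast j.factorial_ne_zero
  have h1 : ((j.factorial : ℕ) : ℚ_[p]) = (((j.factorial : ℕ) : ℚ) : ℚ_[p]) := by push_cast; ring
  rw [h1, Padic.eq_padicNorm, padicNorm.eq_zpow_of_nonzero hne]
  rw [padicValRat.of_nat]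
  push_cast
  ring

lemma exponent_ineq (a j : ℕ) (hp5 : 5 ≤ p) (hj : 2 ≤ j) :
    2 + 2*a + padicValNat p (j.factorial) ≤ (1+a)*j := by
  set ν := padicValNat p j.factorial with hν
  have h4 : 4*ν ≤ j := by
    have hleg := sub_one_mul_padicValNat_factorial (p := p) j
    rw [← hν] at hleg
    have h1 : (p-1)*ν ≤ j := hleg ▸ Nat.sub_le j _
    have h2 : 4*ν ≤ (p-1)*ν := Nat.mul_le_mul_right ν (by omega)
    omega
  have hcase : ν = 0 ∨ ν + 2 ≤ j := by omega
  have hexp : (1+a)*j = j + a*j := by ring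
  have h2a : 2*a ≤ j*a := Nat.mul_le_mul_right a hj
  have hcomm : a*j = j*a := by ring
  rcases hcase with h | h <;> omega

lemma key_coeff_bound (n : ℕ) (hp5 : 5 ≤ p) (hn : 0 < n) (l : ℕ) (hl : p ∣ l) :
    ‖coeff l (myexp (PowerSeries.C (R := ℚ_[p]) ((p*n : ℕ) : ℚ_[p]) * Wser ℚ_[p] p) - 1)‖
      ≤ (p:ℝ)^(-(2 + 2*(padicValNat p n) : ℤ)) := by
  set a := padicValNat p n with ha
  have hq1 : (1:ℝ) < (p:ℝ) := by
    have := hp.out.one_lt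
    exact_mod_cast this
  have hCpos : (0:ℝ) ≤ (p:ℝ)^(-(2 + 2*a : ℤ)) := le_of_lt (zpow_pos (by linarith) _)
  set W : ℚ_[p]⟦X⟧ := PowerSeries.C (R := ℚ_[p]) ((p*n : ℕ) : ℚ_[p]) * Wser ℚ_[p] p with hW
  have hWc : constantCoeff W = 0 := by
    rw [hW, map_mul, constantCoeff_Wser, mul_zero]
  rcases Nat.eq_zero_or_pos l with rfl | hl0
  · rw [map_sub, coeff_zero_eq_constantCoeff, constantCoeff_myexp hWc, map_one, sub_self,
      norm_zero]
    exact hCpos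
  · rw [map_sub, PowerSeries.coeff_one, if_neg (by omega : ¬ l = 0), sub_zero, coeff_myexp]
    apply padic_norm_sum_le _ _ hCpos
    intro j hj
    rcases Nat.lt_or_ge j 2 with hj2 | hj2
    · interval_cases j
      · rw [pow_zero, PowerSeries.coeff_one, if_neg (by omega : ¬ l = 0)]
        simpa using hCpos
      · rw [pow_one, hW, PowerSeries.coeff_C_mul, Wser, coeff_mk,
          if_pos (Or.inl hl), mul_zero]
        simpa using hCpos
    · -- j ≥ 2
      have hterm : coeff l (W^j) = ((p*n : ℕ) : ℚ_[p])^j * coeff l ((Wser ℚ_[p] p)^j) := by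
        rw [hW, mul_pow, ← map_pow, PowerSeries.coeff_C_mul]
      rw [hterm]
      set ν := padicValNat p (j.factorial) with hν
      have hcn : ‖((p*n : ℕ) : ℚ_[p])‖ ≤ (p:ℝ)^(-(1+a:ℤ)) := by
        have hdvd : ((p:ℤ))^(1+a) ∣ ((p*n : ℕ) : ℤ) := by
          have h1 : p^(1+a) ∣ p*n := by
            rw [show p^(1+a) = p * p^a by rw [pow_add, pow_one]]
            exact Nat.mul_dvd_mul_left p ((ha ▸ pow_padicValNat_dvd : p^a ∣ n))
          exact_mod_cast Int.natCast_dvd_natCast.mpr h1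
        have := (Padic.norm_int_le_pow_iff_dvd (((p*n : ℕ)) : ℤ) (1+a)).mpr hdvd
        push_cast at this ⊢
        exact this
      have hnorm : ‖((p*n : ℕ) : ℚ_[p])^j * coeff l ((Wser ℚ_[p] p)^j) / (j.factorial : ℚ_[p])‖
          ≤ ((p:ℝ)^(-(1+a:ℤ)))^j * 1 / (p:ℝ)^(-(ν:ℤ)) := by
        have hp0R : (0:ℝ) < (p:ℝ) := lt_trans zero_lt_one hq1
        rw [norm_div, norm_mul, norm_pow, norm_factorial_padic]
        gcongr
        all_goals first
          | exact hcn
          | exact norm_coeff_pow_Wser_le j l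
          | exact norm_nonneg _
          | exact le_of_lt (zpow_pos hp0R _)
          | positivity
      refine le_trans hnorm ?_
      rw [mul_one, ← zpow_natCast ((p:ℝ)^(-(1+a:ℤ))) j, ← zpow_mul,
        ← zpow_sub₀ ((lt_trans zero_lt_one hq1).ne' : (p:ℝ) ≠ 0)]
      apply zpow_le_zpow_right₀ (le_of_lt hq1)
      have hkey : 2 + 2*a + ν ≤ (1+a)*j := exponent_ineq a j hp5 hj2
      have hkey' : (2 + 2*(a:ℤ) + (ν:ℤ)) ≤ (1+(a:ℤ))*(j:ℤ) := by exact_mod_cast hkey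
      linarith

end Padic


set_option maxHeartbeats 1000000 in
theorem trinomial_pn_sub_n_divisibility (p : ℕ) (hp : p.Prime) (hp3 : 3 < p)
    (n : ℕ) (hn : 0 < n) :
    (p : ℤ) ^ (2 + 2 * padicValNat p n) ∣
      (centralTrinomial (p * n) : ℤ) - centralTrinomial n := by
  haveI : Fact p.Prime := ⟨hp⟩
  set a := padicValNat p n with ha
  have hp0 : 0 < p := hp.pos
  have hp5 : 5 ≤ p := by
    have h4 : p ≠ 4 := by rintro rfl; norm_num at hp
    omega
  have hcop : Nat.Coprime 3 p :=
    (Nat.coprime_primes (by norm_num) hp).mpr (by omega)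
  have hq1 : (1:ℝ) < (p:ℝ) := by exact_mod_cast hp.one_lt
  have hCpos : (0:ℝ) ≤ (p:ℝ)^(-(2 + 2*a : ℤ)) := le_of_lt (zpow_pos (by linarith) _)
  have hid := main_identity (K := ℚ_[p]) p n hp0 hn hcop
  set E : ℚ_[p]⟦X⟧ := myexp (PowerSeries.C (R := ℚ_[p]) ((p*n : ℕ) : ℚ_[p]) * Wser ℚ_[p] p) with hE
  have hT1 : coeff (p*n) ((1+X+X^2 : ℚ_[p]⟦X⟧)^(p*n))
      = ((centralTrinomial (p*n) : ℤ) : ℚ_[p]) := by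
    rw [coeff_A_pow, coeff_trinomial_pow]
  have hT2 : coeff (p*n) ((1+X^p+(X^p)^2 : ℚ_[p]⟦X⟧)^n)
      = ((centralTrinomial n : ℤ) : ℚ_[p]) := by
    rw [coeff_Ap_pow p hp0, if_pos (dvd_mul_right p n), Nat.mul_div_cancel_left n hp0,
      coeff_trinomial_pow]
  have hdiff : ((centralTrinomial (p*n) : ℤ) : ℚ_[p]) - ((centralTrinomial n : ℤ) : ℚ_[p])
      = coeff (p*n) ((1+X^p+(X^p)^2 : ℚ_[p]⟦X⟧)^n * (E - 1)) := by
    rw [mul_sub, mul_one, map_sub, ← hid, hT1, hT2]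
  have hbound : ‖coeff (p*n) ((1+X^p+(X^p)^2 : ℚ_[p]⟦X⟧)^n * (E-1))‖
      ≤ (p:ℝ)^(-(2+2*a : ℤ)) := by
    rw [PowerSeries.coeff_mul]
    apply padic_norm_sum_le _ _ hCpos
    intro q hq
    by_cases hq1' : p ∣ q.1
    · have hsum := Finset.HasAntidiagonal.mem_antidiagonal.mp hq
      have hq2 : p ∣ q.2 := by
        have h2 : q.2 = p*n - q.1 := by omega
        rw [h2]
        exact Nat.dvd_sub (dvd_mul_right p n) hq1'
      rw [norm_mul]
      have hb1 : ‖coeff q.1 ((1+X^p+(X^p)^2 : ℚ_[p]⟦X⟧)^n)‖ ≤ 1 := by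
        rw [coeff_Ap_pow p hp0, if_pos hq1']
        exact Padic.norm_int_le_one _
      have hb2 : ‖coeff q.2 (E-1)‖ ≤ (p:ℝ)^(-(2+2*a : ℤ)) := by
        rw [hE]
        exact key_coeff_bound n hp5 hn q.2 hq2
      calc ‖coeff q.1 ((1+X^p+(X^p)^2 : ℚ_[p]⟦X⟧)^n)‖ * ‖coeff q.2 (E-1)‖
          ≤ 1 * ((p:ℝ)^(-(2+2*a : ℤ))) :=
            mul_le_mul hb1 hb2 (norm_nonneg _) zero_le_one
        _ = (p:ℝ)^(-(2+2*a : ℤ)) := one_mul _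
    · rw [coeff_Ap_pow p hp0, if_neg hq1', zero_mul, norm_zero]
      exact hCpos
  rw [← hdiff] at hbound
  rw [← Int.cast_sub] at hbound
  have hexp : (-(((2+2*a : ℕ)) : ℤ)) = -(2+2*(a:ℤ)) := by push_cast; ring
  have hfin := (Padic.norm_int_le_pow_iff_dvd
    ((centralTrinomial (p*n) : ℤ) - centralTrinomial n) (2+2*a)).mp (by
      rw [hexp]; exact_mod_cast hbound)
  exact_mod_cast hfin

end PSLemmas
end

section
/- For any prime p > 3 and any positive integer a, one has T_{p^a} ≡ 1 (mod p^2). -/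
open Polynomial Finset


/-- The trinomial `1 + X + X^2` over `ℤ`. -/
noncomputable def trino : ℤ[X] := 1 + X + X ^ 2

lemma trino_eq : trino = X ^ 2 + (X + 1) := by unfold trino; ring

lemma trino_monic : trino.Monic := by
  rw [trino_eq]
  apply Polynomial.monic_X_pow_add
  have h : (X + 1 : ℤ[X]).degree = 1 := by
    rw [← Polynomial.C_1]; exact Polynomial.degree_X_add_C 1
  rw [h]; norm_num

lemma trino_natDegree : trino.natDegree = 2 := by
  unfold trino; compute_degree!

lemma dvd_of_map_zero (p : ℕ) (g : ℤ[X])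
    (h : g.map (Int.castRingHom (ZMod p)) = 0) : C (p : ℤ) ∣ g := by
  rw [Polynomial.C_dvd_iff_dvd_coeff]
  intro i
  have h2 := congrArg (fun q => Polynomial.coeff q i) h
  simp only [Polynomial.coeff_map, Polynomial.coeff_zero] at h2
  have h3 : ((g.coeff i : ℤ) : ZMod p) = 0 := by
    simpa using h2
  exact (ZMod.intCast_zmod_eq_zero_iff_dvd _ _).1 h3

lemma dvd_Dp (p : ℕ) (hp : p.Prime) :
    C (p : ℤ) ∣ trino ^ p - (1 + X ^ p + X ^ (2 * p)) := by
  haveI : Fact p.Prime := ⟨hp⟩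
  apply dvd_of_map_zero
  simp only [Polynomial.map_sub, Polynomial.map_pow, Polynomial.map_add,
    Polynomial.map_one, Polynomial.map_X]
  have h1 : trino.map (Int.castRingHom (ZMod p)) = 1 + X + X ^ 2 := by
    unfold trino
    simp [Polynomial.map_add, Polynomial.map_pow]
  rw [h1]
  have h2 : ((1 : (ZMod p)[X]) + X + X ^ 2) ^ p = 1 + X ^ p + X ^ (2 * p) := by
    rw [add_pow_char, add_pow_char, one_pow, ← pow_mul, mul_comm 2 p]
  rw [h2]
  ring

lemma dvd_Ep (p : ℕ) (hp : p.Prime) :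
    C (p : ℤ) ∣ ((X - 1 : ℤ[X]) ^ p - X ^ p + 1) := by
  haveI : Fact p.Prime := ⟨hp⟩
  apply dvd_of_map_zero
  simp only [Polynomial.map_add, Polynomial.map_sub, Polynomial.map_pow,
    Polynomial.map_one, Polynomial.map_X]
  rw [sub_pow_char, one_pow]
  ring

lemma Ep_coeff_zero (p : ℕ) (hp : p.Prime) (hp2 : 2 < p) :
    ((X - 1 : ℤ[X]) ^ p - X ^ p + 1).coeff 0 = 0 := by
  have h1 : ((X - 1 : ℤ[X]) ^ p).coeff 0 = -1 := by
    rw [Polynomial.coeff_zero_eq_eval_zero]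
    simp only [Polynomial.eval_pow, Polynomial.eval_sub, Polynomial.eval_X,
      Polynomial.eval_one, zero_sub]
    exact Odd.neg_one_pow (hp.odd_of_ne_two (by omega))
  have h2 : ((X : ℤ[X]) ^ p).coeff 0 = 0 := by
    rw [Polynomial.coeff_X_pow]
    simp [hp.ne_zero]
    omega
  simp [Polynomial.coeff_add, Polynomial.coeff_sub, h1, h2]

lemma Ep_coeff_p (p : ℕ) (hp : p.Prime) :
    ((X - 1 : ℤ[X]) ^ p - X ^ p + 1).coeff p = 0 := by
  have hm : ((X - 1 : ℤ[X]) ^ p).Monic := by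
    have : (X - 1 : ℤ[X]) = X - C 1 := by simp
    rw [this]
    exact (Polynomial.monic_X_sub_C 1).pow p
  have hd : ((X - 1 : ℤ[X]) ^ p).natDegree = p := by
    have : (X - 1 : ℤ[X]) = X - C 1 := by simp
    rw [this, Polynomial.natDegree_pow, Polynomial.natDegree_X_sub_C, mul_one]
  have h1 : ((X - 1 : ℤ[X]) ^ p).coeff p = 1 := by
    have h := hm.coeff_natDegree
    rwa [hd] at h
  have h2 : ((X : ℤ[X]) ^ p).coeff p = 1 := by simp [Polynomial.coeff_X_pow]
  have h3 : (1 : ℤ[X]).coeff p = 0 := by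
    simp [Polynomial.coeff_one, hp.ne_zero]
  simp [Polynomial.coeff_add, Polynomial.coeff_sub, h1, h2, h3]

lemma Ep_coeff_2p (p : ℕ) (hp : p.Prime) :
    ((X - 1 : ℤ[X]) ^ p - X ^ p + 1).coeff (2 * p) = 0 := by
  have hd : ((X - 1 : ℤ[X]) ^ p).natDegree = p := by
    have : (X - 1 : ℤ[X]) = X - C 1 := by simp
    rw [this, Polynomial.natDegree_pow, Polynomial.natDegree_X_sub_C, mul_one]
  have h1 : ((X - 1 : ℤ[X]) ^ p).coeff (2 * p) = 0 := by
    apply Polynomial.coeff_eq_zero_of_natDegree_lt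
    rw [hd]
    have := hp.pos
    omega
  have h2 : ((X : ℤ[X]) ^ p).coeff (2 * p) = 0 := by
    rw [Polynomial.coeff_X_pow]
    have := hp.pos
    simp only [ite_eq_right_iff]
    omega
  have h3 : (1 : ℤ[X]).coeff (2 * p) = 0 := by
    rw [Polynomial.coeff_one]
    have := hp.pos
    simp only [ite_eq_right_iff]
    omega
  simp [Polynomial.coeff_add, Polynomial.coeff_sub, h1, h2, h3]

lemma base_case (p : ℕ) (hp : p.Prime) (hp3 : 3 < p) :
    ((p : ℤ)) ^ 2 ∣ (trino ^ p).coeff p - 1 := by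
  haveI : Fact p.Prime := ⟨hp⟩
  have hppos := hp.pos
  obtain ⟨D, hD⟩ := dvd_Dp p hp
  obtain ⟨E, hE⟩ := dvd_Ep p hp
  set Q : ℤ[X] := trino ^ p - (1 + X ^ p + X ^ (2 * p)) with hQ
  set Ee : ℤ[X] := (X - 1 : ℤ[X]) ^ p - X ^ p + 1 with hEe
  -- the main algebraic identity
  have hid : trino ^ p * (X - 1 : ℤ[X]) ^ p = expand ℤ 3 ((X - 1 : ℤ[X]) ^ p) := by
    rw [map_pow, map_sub, Polynomial.expand_X, map_one, ← mul_pow]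
    congr 1
    unfold trino; ring
  have hexp : expand ℤ 3 ((X - 1 : ℤ[X]) ^ p)
      = expand ℤ 3 Ee + ((X : ℤ[X]) ^ 3) ^ p - 1 := by
    have hA : (X - 1 : ℤ[X]) ^ p = Ee + X ^ p - 1 := by rw [hEe]; ring
    rw [hA, map_sub, map_add, map_pow, Polynomial.expand_X, map_one]
  have key : Q * (X ^ p - 1) =
      expand ℤ 3 Ee - (1 + X ^ p + X ^ (2 * p)) * Ee - Q * Ee := by
    have h := hid
    rw [hexp] at h
    rw [hQ, hEe]
    linear_combination h
  -- now extract the coefficient of X^(2p)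
  have hco := congrArg (fun q : ℤ[X] => q.coeff (2 * p)) key
  simp only [Polynomial.coeff_sub] at hco
  -- left side
  have l1 : (Q * (X ^ p - 1)).coeff (2 * p) = Q.coeff p - Q.coeff (2 * p) := by
    rw [mul_sub, mul_one, Polynomial.coeff_sub]
    congr 1
    have h2p : 2 * p = p + p := by ring
    rw [h2p, Polynomial.coeff_mul_X_pow]
  -- coefficient of Q at 2p is zero
  have c1 : (trino ^ p).coeff (2 * p) = 1 := by
    have hmon : (trino ^ p).Monic := trino_monic.pow p
    have hdeg : (trino ^ p).natDegree = p * 2 := by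
      rw [Polynomial.natDegree_pow, trino_natDegree]
    have h := hmon.coeff_natDegree
    rw [hdeg, mul_comm p 2] at h
    exact h
  have c2 : ((1 : ℤ[X]) + X ^ p + X ^ (2 * p)).coeff (2 * p) = 1 := by
    have h0 : ¬(2 * p = 0) := by omega
    have h1 : ¬(p = 2 * p) := by omega
    have h2 : ¬(2 * p = p) := by omega
    simp [Polynomial.coeff_add, Polynomial.coeff_one, Polynomial.coeff_X_pow, h0, h1, h2]
  have cQ2p : Q.coeff (2 * p) = 0 := by
    rw [hQ, Polynomial.coeff_sub, c1, c2]; ring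
  -- coefficient of expand at 2p is zero
  have r1 : (expand ℤ 3 Ee).coeff (2 * p) = 0 := by
    rw [Polynomial.coeff_expand (by norm_num : 0 < 3)]
    have h3 : ¬(3 ∣ 2 * p) := by
      intro h
      rcases (Nat.Prime.dvd_mul (by norm_num : Nat.Prime 3)).1 h with h | h
      · omega
      · have := (Nat.prime_dvd_prime_iff_eq (by norm_num : Nat.Prime 3) hp).1 h
        omega
    rw [if_neg h3]
  -- coefficient of the middle product at 2p is zero
  have r2 : (((1 : ℤ[X]) + X ^ p + X ^ (2 * p)) * Ee).coeff (2 * p) = 0 := by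
    rw [add_mul, add_mul, one_mul, Polynomial.coeff_add, Polynomial.coeff_add]
    have e0 := Ep_coeff_zero p hp (by omega)
    have ep := Ep_coeff_p p hp
    have e2p := Ep_coeff_2p p hp
    have m1 : ((X : ℤ[X]) ^ p * Ee).coeff (2 * p) = Ee.coeff p := by
      have h2p : 2 * p = p + p := by ring
      rw [h2p, Polynomial.coeff_X_pow_mul]
    have m2 : ((X : ℤ[X]) ^ (2 * p) * Ee).coeff (2 * p) = Ee.coeff 0 := by
      have h := Polynomial.coeff_X_pow_mul Ee (2 * p) 0
      simpa using h
    rw [m1, m2, ← hEe] at *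
    rw [e2p, ep, e0]
    ring
  -- the last product is divisible by p^2
  have r3 : ((p : ℤ)) ^ 2 ∣ (Q * Ee).coeff (2 * p) := by
    rw [hD, hE]
    have : (C (p : ℤ) * D) * (C (p : ℤ) * E) = C ((p : ℤ) ^ 2) * (D * E) := by
      rw [pow_two, Polynomial.C_mul]; ring
    rw [this, Polynomial.coeff_C_mul]
    exact Dvd.intro _ rfl
  -- conclude p^2 ∣ Q.coeff p
  have hQp : ((p : ℤ)) ^ 2 ∣ Q.coeff p := by
    have : Q.coeff p = -(Q * Ee).coeff (2 * p) := by
      rw [l1] at hco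
      rw [r1, r2] at hco
      rw [cQ2p] at hco
      linarith [hco]
    rw [this]
    exact dvd_neg.2 r3
  -- finally relate Q.coeff p to (trino^p).coeff p - 1
  have cmid : ((1 : ℤ[X]) + X ^ p + X ^ (2 * p)).coeff p = 1 := by
    have h0 : ¬(p = 0) := by omega
    have h1 : ¬(2 * p = p) := by omega
    simp [Polynomial.coeff_add, Polynomial.coeff_one, Polynomial.coeff_X_pow, h0, h1]
  have : (trino ^ p).coeff p - 1 = Q.coeff p := by
    rw [hQ, Polynomial.coeff_sub, cmid]
  rw [this]
  exact hQp

lemma step_case (p : ℕ) (hp : p.Prime) (a : ℕ) (ha : 1 ≤ a) :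
    ((p : ℤ)) ^ 2 ∣ (trino ^ p ^ (a + 1)).coeff (p ^ (a + 1))
      - (trino ^ p ^ a).coeff (p ^ a) := by
  obtain ⟨D, hD⟩ := dvd_Dp p hp
  have hT : trino ^ p = expand ℤ p trino + C (p : ℤ) * D := by
    have hexp : expand ℤ p trino = 1 + X ^ p + X ^ (2 * p) := by
      unfold trino
      rw [map_add, map_add, map_one, Polynomial.expand_X, map_pow,
        Polynomial.expand_X, ← pow_mul, mul_comm p 2]
    rw [hexp, ← hD]; ring
  have key : C ((p : ℤ) ^ 2) ∣ trino ^ p ^ (a + 1) - expand ℤ p (trino ^ p ^ a) := by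
    have h1 : trino ^ p ^ (a + 1) = (C (p : ℤ) * D + expand ℤ p trino) ^ p ^ a := by
      rw [pow_succ', pow_mul, hT, add_comm]
    rw [h1, add_pow, Finset.sum_range_succ', map_pow,
      show expand ℤ p (trino ^ p ^ a) = (expand ℤ p trino) ^ p ^ a from map_pow _ _ _]
    simp only [pow_zero, one_mul, Nat.sub_zero, Nat.choose_zero_right, Nat.cast_one, mul_one]
    rw [add_sub_cancel_right]
    apply Finset.dvd_sum
    intro i _
    rcases Nat.eq_zero_or_pos i with h0 | h1
    · subst h0
      simp only [zero_add, pow_one, Nat.choose_one_right]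
      have hdvd : C (p : ℤ) ∣ ((p ^ a : ℕ) : ℤ[X]) := by
        rw [← Polynomial.C_eq_natCast]
        have : (p : ℤ) ∣ ((p ^ a : ℕ) : ℤ) := by
          push_cast
          exact dvd_pow_self (p : ℤ) (by omega)
        exact map_dvd C this
      have hshape : C (p : ℤ) * D * (expand ℤ p trino) ^ (p ^ a - 1) * ((p ^ a : ℕ) : ℤ[X])
          = (C (p : ℤ) * (D * (expand ℤ p trino) ^ (p ^ a - 1))) * ((p ^ a : ℕ) : ℤ[X]) := by
        ring
      rw [pow_two, hshape]
      exact mul_dvd_mul (dvd_mul_right _ _) hdvd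
    · have h2 : (C (p : ℤ)) ^ 2 ∣ (C (p : ℤ) * D) ^ (i + 1) := by
        rw [mul_pow]
        exact dvd_mul_of_dvd_left (pow_dvd_pow _ (by omega)) _
      exact dvd_mul_of_dvd_left (dvd_mul_of_dvd_left h2 _) _
  rw [Polynomial.C_dvd_iff_dvd_coeff] at key
  have hc := key (p ^ (a + 1))
  rw [Polynomial.coeff_sub] at hc
  have hexpco : (expand ℤ p (trino ^ p ^ a)).coeff (p ^ (a + 1))
      = (trino ^ p ^ a).coeff (p ^ a) := by
    rw [Polynomial.coeff_expand hp.pos]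
    rw [if_pos (dvd_pow_self p (by omega) : p ∣ p ^ (a + 1))]
    congr 1
    rw [pow_succ, Nat.mul_div_cancel _ hp.pos]
  rw [hexpco] at hc
  have : (↑p : ℤ) ^ 2 ∣ Polynomial.coeff (trino ^ p ^ (a + 1)) (p ^ (a + 1)) -
      Polynomial.coeff (trino ^ p ^ a) (p ^ a) := hc
  exact this

lemma sum_eq_central (n : ℕ) :
    ∑ k ∈ range (n + 1), n.choose k * k.choose (n - k) = centralTrinomial n := by
  unfold centralTrinomial
  have hrefl : ∑ k ∈ range (n + 1), n.choose k * k.choose (n - k)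
      = ∑ k ∈ range (n + 1), n.choose (n - k) * (n - k).choose (n - (n - k)) := by
    rw [eq_comm]
    have h := Finset.sum_range_reflect (fun k => n.choose k * k.choose (n - k)) (n + 1)
    simp only [Nat.add_sub_cancel] at h
    exact h
  rw [hrefl]
  have hstep : ∀ k ∈ range (n + 1),
      n.choose (n - k) * (n - k).choose (n - (n - k)) = n.choose (2 * k) * (2 * k).choose k := by
    intro k hk
    rw [Finset.mem_range] at hk
    have hk' : k ≤ n := by omega
    rw [Nat.choose_symm hk', show n - (n - k) = k by omega]
    by_cases h2 : 2 * k ≤ n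
    · have h := Nat.choose_mul (n := n) (show k ≤ 2 * k by omega)
      rw [show 2 * k - k = k by omega] at h
      exact h.symm
    · have ha : n.choose (2 * k) = 0 := Nat.choose_eq_zero_of_lt (by omega)
      have hb : (n - k).choose k = 0 := Nat.choose_eq_zero_of_lt (by omega)
      rw [ha, hb]
      ring
  rw [Finset.sum_congr rfl hstep]
  rw [eq_comm]
  apply Finset.sum_subset
  · exact Finset.range_subset_range.2 (by omega)
  · intro k hk hk'
    rw [Finset.mem_range] at hk hk'
    have : n < 2 * k := by omega
    rw [Nat.choose_eq_zero_of_lt this, zero_mul]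

lemma trino_coeff_central (n : ℕ) :
    (trino ^ n).coeff n = (centralTrinomial n : ℤ) := by
  have h1 : trino = X * (1 + X) + 1 := by unfold trino; ring
  rw [h1, add_pow, Polynomial.finset_sum_coeff]
  have hterm : ∀ k ∈ range (n + 1),
      ((X * (1 + X)) ^ k * 1 ^ (n - k) * ((n.choose k : ℕ) : ℤ[X])).coeff n
        = ((n.choose k * k.choose (n - k) : ℕ) : ℤ) := by
    intro k hk
    rw [Finset.mem_range] at hk
    have hk' : k ≤ n := by omega
    rw [one_pow, mul_one, mul_pow, ← Polynomial.C_eq_natCast, Polynomial.coeff_mul_C]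
    have hcc := Polynomial.coeff_X_pow_mul ((1 + X : ℤ[X]) ^ k) k (n - k)
    rw [Nat.sub_add_cancel hk'] at hcc
    rw [hcc, Polynomial.coeff_one_add_X_pow]
    push_cast
    ring
  rw [Finset.sum_congr rfl hterm, ← Nat.cast_sum, sum_eq_central]

theorem trinomial_prime_power_cong_one (p : ℕ) (hp : p.Prime) (hp3 : 3 < p)
    (a : ℕ) (ha : 0 < a) :
    (centralTrinomial (p ^ a) : ℤ) ≡ 1 [ZMOD (p ^ 2)] := by
  have main : ∀ b, 1 ≤ b → ((p : ℤ)) ^ 2 ∣ (trino ^ p ^ b).coeff (p ^ b) - 1 := by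
    intro b hb
    induction b, hb using Nat.le_induction with
    | base => simpa [pow_one] using base_case p hp hp3
    | succ n hn ih =>
      have hs := step_case p hp n hn
      have h := dvd_add hs ih
      simpa using h
  have h := main a ha
  rw [trino_coeff_central] at h
  rw [Int.modEq_iff_dvd]
  have h2 : (1 : ℤ) - (centralTrinomial (p ^ a) : ℤ)
      = -((centralTrinomial (p ^ a) : ℤ) - 1) := by ring
  rw [h2]
  exact dvd_neg.2 h
end

section
/- Let p > 3 be a prime. Then Σ_{0<k<p, 3 | (k+p)} 1/k^2 ≡ −(1/9) · (p/3) · B_{p−2}(1/3) (mod p), where the sum ranges over integers k with 0 < k < p and k + p divisible by 3, i.e., the p-adic valuation of the rational number Σ_{0<k<p, 3|(k+p)} 1/k^2 + (1/9)(p/3)B_{p−2}(1/3) is at least 1. -/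
open Finset IsUltrametricDist

section Aux

theorem zmodSumUniv (p : ℕ) [hp : Fact p.Prime] (f : ZMod p → ZMod p) :
    ∑ x : ZMod p, f x = ∑ k ∈ range p, f (k : ZMod p) := by
  haveI : NeZero p := ⟨hp.out.ne_zero⟩
  exact Finset.sum_bij' (fun x _ => x.val) (fun k _ => (k : ZMod p))
    (by simp [ZMod.val_lt]) (by simp) (by simp [ZMod.natCast_val, ZMod.cast_id])
    (by intro a ha; simp [ZMod.val_natCast, Nat.mod_eq_of_lt (Finset.mem_range.mp ha)])
    (by simp [ZMod.natCast_val, ZMod.cast_id])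

theorem normSubLeMax {p : ℕ} [hp : Fact p.Prime] (x y : ℚ_[p]) :
    ‖x - y‖ ≤ max ‖x‖ ‖y‖ := by
  rw [sub_eq_add_neg]
  simpa using IsUltrametricDist.norm_add_le_max x (-y)

theorem normRatLeInv (p : ℕ) [hp : Fact p.Prime] {x : ℚ} {a b : ℤ}
    (h : x * (b : ℚ) = (p : ℚ) * a) (hb : ¬ (p : ℤ) ∣ b) :
    ‖(x : ℚ_[p])‖ ≤ (p : ℝ)⁻¹ := by
  have hb0 : (b : ℚ) ≠ 0 := by
    exact_mod_cast fun h0 => hb (by simp [h0])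
  have hx : (x : ℚ_[p]) = (p : ℚ_[p]) * (a : ℚ_[p]) / (b : ℚ_[p]) := by
    have : ((x * b : ℚ) : ℚ_[p]) = (((p : ℚ) * a : ℚ) : ℚ_[p]) := by rw [h]
    push_cast at this
    rw [eq_div_iff (by exact_mod_cast hb0 ∘ (by exact_mod_cast fun h => h))]
    linear_combination this
  have hbnorm : ‖((b : ℚ_[p]))‖ = 1 := by
    refine le_antisymm (Padic.norm_int_le_one b) ?_
    by_contra hlt
    push_neg at hlt
    exact hb ((Padic.norm_intCast_lt_one_iff (k := b)).mp hlt)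
  rw [hx, norm_div, norm_mul, hbnorm, div_one, Padic.norm_p]
  calc (p:ℝ)⁻¹ * ‖(a : ℚ_[p])‖ ≤ (p:ℝ)⁻¹ * 1 := by
        exact mul_le_mul_of_nonneg_left (Padic.norm_int_le_one a) (by positivity)
    _ = (p:ℝ)⁻¹ := mul_one _

theorem normSumPowLe (p : ℕ) [hp : Fact p.Prime] {m : ℕ} (hm : m < p - 1) :
    ‖((∑ k ∈ range p, (k:ℚ)^m : ℚ) : ℚ_[p])‖ ≤ (p : ℝ)⁻¹ := by
  haveI : NeZero p := ⟨hp.out.ne_zero⟩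
  have hdvd : (p : ℤ) ∣ ∑ k ∈ range p, (k : ℤ)^m := by
    have : ((∑ k ∈ range p, (k : ℤ)^m : ℤ) : ZMod p) = 0 := by
      push_cast
      rw [← zmodSumUniv p (fun x => x ^ m)]
      exact FiniteField.sum_pow_lt_card_sub_one (ZMod p) m (by rwa [ZMod.card])
    exact_mod_cast (ZMod.intCast_zmod_eq_zero_iff_dvd _ p).mp this
  obtain ⟨c, hc⟩ := hdvd
  have hx : (∑ k ∈ range p, (k:ℚ)^m : ℚ) * (1 : ℤ) = (p : ℚ) * (c : ℚ) := by
    push_cast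
    rw [mul_one]
    exact_mod_cast congrArg (fun z : ℤ => (z : ℚ)) hc
  exact normRatLeInv p hx (by
    intro h
    have h1 : (p:ℤ) = 1 := Int.eq_one_of_dvd_one (by positivity) h
    have : p = 1 := by exact_mod_cast h1
    exact hp.out.one_lt.ne' this)

theorem normNatUnit (p : ℕ) [hp : Fact p.Prime] {k : ℕ} (h : ¬ p ∣ k) :
    ‖(k : ℚ_[p])‖ = 1 := by
  refine le_antisymm (by exact_mod_cast Padic.norm_int_le_one (k : ℤ)) ?_
  by_contra hlt
  push_neg at hlt
  have : ‖((k : ℤ) : ℚ_[p])‖ < 1 := by exact_mod_cast hlt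
  exact h (by exact_mod_cast (Padic.norm_intCast_lt_one_iff (k := (k:ℤ))).mp this)

theorem normBernoulliLe (p : ℕ) [hp : Fact p.Prime] :
    ∀ i, i ≤ p - 2 → ‖((bernoulli i : ℚ) : ℚ_[p])‖ ≤ 1 := by
  intro i
  induction i using Nat.strong_induction_on with
  | _ i IH =>
    intro hi
    have hp2 : 2 ≤ p := hp.out.two_le
    have key := sum_range_pow p i
    rw [Finset.sum_range_succ] at key
    have hlast : bernoulli i * ((i + 1).choose i : ℚ) * (p : ℚ) ^ (i + 1 - i) / ((i:ℚ) + 1)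
        = bernoulli i * (p : ℚ) := by
      rw [Nat.choose_succ_self_right]
      have : i + 1 - i = 1 := by omega
      rw [this, pow_one]
      have h1 : ((i+1 : ℕ) : ℚ) ≠ 0 := by exact_mod_cast Nat.succ_ne_zero i
      push_cast at h1 ⊢
      field_simp
    rw [hlast] at key
    have keyq : (bernoulli i : ℚ) * (p : ℚ) = (∑ k ∈ range p, (k:ℚ)^i)
        - ∑ j ∈ range i, bernoulli j * ((i + 1).choose j : ℚ) * (p : ℚ) ^ (i + 1 - j) / ((i:ℚ) + 1) := by
      rw [key]; ring
    have hcast : ((bernoulli i : ℚ) : ℚ_[p]) * (p : ℚ_[p])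
        = (((∑ k ∈ range p, (k:ℚ)^i) : ℚ) : ℚ_[p])
          - ∑ j ∈ range i, ((bernoulli j : ℚ) : ℚ_[p]) * ((i + 1).choose j : ℚ_[p]) * (p : ℚ_[p]) ^ (i + 1 - j) / ((i:ℚ_[p]) + 1) := by
      have := congrArg (fun x : ℚ => (x : ℚ_[p])) keyq
      push_cast at this ⊢
      convert this using 2
    have hbound : ‖((bernoulli i : ℚ) : ℚ_[p]) * (p : ℚ_[p])‖ ≤ (p:ℝ)⁻¹ := by
      rw [hcast]
      refine (normSubLeMax _ _).trans (max_le ?_ ?_)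
      · exact normSumPowLe p (by omega)
      · refine norm_sum_le_of_forall_le_of_nonneg (by positivity) ?_
        intro j hj
        rw [mem_range] at hj
        rw [norm_div, norm_mul, norm_mul, norm_pow, Padic.norm_p]
        have h1 : ‖((bernoulli j : ℚ) : ℚ_[p])‖ ≤ 1 := IH j hj (by omega)
        have h2 : ‖(((i + 1).choose j : ℕ) : ℚ_[p])‖ ≤ 1 := by
          exact_mod_cast Padic.norm_int_le_one (((i + 1).choose j : ℕ) : ℤ)
        have h3 : ((p:ℝ)⁻¹) ^ (i + 1 - j) ≤ (p:ℝ)⁻¹ := by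
          calc ((p:ℝ)⁻¹) ^ (i + 1 - j) ≤ ((p:ℝ)⁻¹) ^ 1 :=
            pow_le_pow_of_le_one (by positivity) (by
              rw [inv_le_one_iff₀]; right; exact_mod_cast hp.out.one_lt.le) (by omega)
          _ = (p:ℝ)⁻¹ := pow_one _
        have h4 : ‖((i : ℚ_[p]) + 1)‖ = 1 := by
          have : ((i : ℚ_[p]) + 1) = ((i + 1 : ℕ) : ℚ_[p]) := by push_cast; ring
          rw [this]
          exact normNatUnit p (by
            intro hdvd
            have := Nat.le_of_dvd (by omega) hdvd
            omega)
        rw [h4, div_one]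
        calc ‖((bernoulli j : ℚ) : ℚ_[p])‖ * ‖(((i+1).choose j : ℚ_[p]))‖ * ((p:ℝ)⁻¹) ^ (i+1-j)
            ≤ 1 * 1 * (p:ℝ)⁻¹ := by
              refine mul_le_mul (mul_le_mul h1 (by exact_mod_cast h2) (norm_nonneg _) zero_le_one) h3 (by positivity) (by norm_num)
          _ = (p:ℝ)⁻¹ := by ring
    rw [norm_mul, Padic.norm_p] at hbound
    have hppos : (0:ℝ) < (p:ℝ)⁻¹ := by
      have : (0:ℝ) < p := by exact_mod_cast hp.out.pos
      positivity
    calc ‖((bernoulli i : ℚ) : ℚ_[p])‖ = ‖((bernoulli i : ℚ) : ℚ_[p])‖ * (p:ℝ)⁻¹ * (p:ℝ) := by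
          field_simp
      _ ≤ (p:ℝ)⁻¹ * (p:ℝ) := mul_le_mul_of_nonneg_right hbound (by positivity)
      _ = 1 := by field_simp

theorem auxCastEval {p : ℕ} [hp : Fact p.Prime] (n : ℕ) (x : ℚ) :
    (((Polynomial.bernoulli n).eval x : ℚ) : ℚ_[p]) =
      ∑ i ∈ range (n+1), ((bernoulli (n-i) : ℚ) : ℚ_[p]) * ((n.choose i : ℕ) : ℚ_[p]) * (x : ℚ_[p])^i := by
  rw [Polynomial.bernoulli_def, Polynomial.eval_finset_sum]
  push_cast
  simp [Polynomial.eval_monomial]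

theorem normPowSubPowLe {p : ℕ} [hp : Fact p.Prime] {x y : ℚ_[p]}
    (hx : ‖x‖ ≤ 1) (hy : ‖y‖ ≤ 1) (i : ℕ) :
    ‖x^i - y^i‖ ≤ ‖x - y‖ := by
  rw [← geom_sum₂_mul x y i, norm_mul]
  have h1 : ‖∑ j ∈ range i, x^j * y^(i-1-j)‖ ≤ 1 := by
    refine norm_sum_le_of_forall_le_of_nonneg zero_le_one ?_
    intro j _
    rw [norm_mul, norm_pow, norm_pow]
    exact mul_le_one₀ (pow_le_one₀ (norm_nonneg _) hx) (by positivity)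
      (pow_le_one₀ (norm_nonneg _) hy)
  calc ‖∑ j ∈ range i, x^j * y^(i-1-j)‖ * ‖x - y‖ ≤ 1 * ‖x - y‖ :=
        mul_le_mul_of_nonneg_right h1 (norm_nonneg _)
    _ = ‖x - y‖ := one_mul _

theorem normNatLeOne {p : ℕ} [hp : Fact p.Prime] (k : ℕ) : ‖((k:ℕ) : ℚ_[p])‖ ≤ 1 := by
  exact_mod_cast Padic.norm_int_le_one (k : ℤ)

theorem normBpolyEvalLe {p : ℕ} [hp : Fact p.Prime] {n : ℕ} (hn : n ≤ p - 2) {x : ℚ}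
    (hx : ‖(x:ℚ_[p])‖ ≤ 1) :
    ‖(((Polynomial.bernoulli n).eval x : ℚ) : ℚ_[p])‖ ≤ 1 := by
  rw [auxCastEval]
  refine norm_sum_le_of_forall_le_of_nonneg zero_le_one ?_
  intro i _
  rw [norm_mul, norm_mul, norm_pow]
  exact mul_le_one₀ (mul_le_one₀ (normBernoulliLe p _ (by omega)) (norm_nonneg _)
    (normNatLeOne _)) (by positivity) (pow_le_one₀ (norm_nonneg _) hx)

theorem normBpolyEvalSubLe {p : ℕ} [hp : Fact p.Prime] {n : ℕ} (hn : n ≤ p - 2) {x y : ℚ}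
    (hx : ‖(x:ℚ_[p])‖ ≤ 1) (hy : ‖(y:ℚ_[p])‖ ≤ 1) (hxy : ‖((x - y : ℚ) : ℚ_[p])‖ ≤ (p:ℝ)⁻¹) :
    ‖(((Polynomial.bernoulli n).eval x - (Polynomial.bernoulli n).eval y : ℚ) : ℚ_[p])‖ ≤ (p:ℝ)⁻¹ := by
  have hcast : (((Polynomial.bernoulli n).eval x - (Polynomial.bernoulli n).eval y : ℚ) : ℚ_[p])
      = ∑ i ∈ range (n+1), ((bernoulli (n-i) : ℚ) : ℚ_[p]) * ((n.choose i : ℕ) : ℚ_[p])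
          * ((x : ℚ_[p])^i - (y : ℚ_[p])^i) := by
    push_cast
    rw [show ((((Polynomial.bernoulli n).eval x : ℚ)) : ℚ_[p]) - (((Polynomial.bernoulli n).eval y : ℚ)) = (((Polynomial.bernoulli n).eval x : ℚ) : ℚ_[p]) - (((Polynomial.bernoulli n).eval y : ℚ) : ℚ_[p]) from rfl]
    rw [auxCastEval, auxCastEval, ← Finset.sum_sub_distrib]
    congr 1; ext i; ring
  rw [hcast]
  have hppos : (0:ℝ) ≤ (p:ℝ)⁻¹ := by positivity
  refine norm_sum_le_of_forall_le_of_nonneg hppos ?_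
  intro i _
  rw [norm_mul]
  have h2 : ‖(x : ℚ_[p])^i - (y : ℚ_[p])^i‖ ≤ (p:ℝ)⁻¹ := by
    refine (normPowSubPowLe hx hy i).trans ?_
    have : ((x : ℚ_[p]) - y) = (((x - y : ℚ)) : ℚ_[p]) := by push_cast; ring
    rw [this]; exact hxy
  calc ‖((bernoulli (n-i) : ℚ) : ℚ_[p]) * ((n.choose i : ℕ) : ℚ_[p])‖ * ‖(x : ℚ_[p])^i - (y : ℚ_[p])^i‖
      ≤ 1 * (p:ℝ)⁻¹ := by
        refine mul_le_mul ?_ h2 (norm_nonneg _) zero_le_one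
        rw [norm_mul]
        exact mul_le_one₀ (normBernoulliLe p _ (by omega)) (norm_nonneg _) (normNatLeOne _)
    _ = (p:ℝ)⁻¹ := one_mul _

theorem bernoulliEvalAddNat (m : ℕ) (x : ℚ) (n : ℕ) :
    (Polynomial.bernoulli (m+1)).eval (x + n) =
      (Polynomial.bernoulli (m+1)).eval x + (m+1) * ∑ j ∈ range n, (x + j)^m := by
  induction n with
  | zero => simp
  | succ n ih =>
    have h1 : x + (n+1 : ℕ) = 1 + (x + n) := by push_cast; ring
    rw [h1, Polynomial.bernoulli_eval_one_add, ih, sum_range_succ,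
      show m + 1 - 1 = m from rfl]
    push_cast
    ring

theorem bernoulliEvalOneSubOdd {n : ℕ} (hn : Odd n) (x : ℚ) :
    (Polynomial.bernoulli n).eval (1 - x) = -(Polynomial.bernoulli n).eval x := by
  have key : ∀ k : ℕ, (Polynomial.bernoulli n).eval (1 - (k:ℚ)) + (Polynomial.bernoulli n).eval (k:ℚ) = 0 := by
    intro k
    induction k with
    | zero =>
      simp only [Nat.cast_zero, sub_zero]
      rw [Polynomial.bernoulli_eval_one, Polynomial.bernoulli_eval_zero,
        bernoulli'_eq_bernoulli, hn.neg_one_pow]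
      ring
    | succ k ih =>
      have h1 : (1 : ℚ) - (k+1 : ℕ) = -(k:ℚ) := by push_cast; ring
      have h2 : ((k+1 : ℕ) : ℚ) = 1 + (k:ℚ) := by push_cast; ring
      rw [h1, h2, Polynomial.bernoulli_eval_one_add]
      have h3 : (1:ℚ) - k = 1 + (-(k:ℚ)) := by ring
      have h4 := Polynomial.bernoulli_eval_one_add n (-(k:ℚ))
      rw [h3, h4] at ih
      have h5 : (-(k:ℚ))^(n-1) = (k:ℚ)^(n-1) := by
        rcases hn with ⟨t, ht⟩
        rw [ht, show 2*t+1-1 = 2*t from rfl]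
        rw [neg_pow, pow_mul, neg_one_sq, one_pow, one_mul]
      rw [h5] at ih
      linarith [ih]
  have hpoly : (Polynomial.bernoulli n).comp (1 - Polynomial.X) + Polynomial.bernoulli n = 0 := by
    apply Polynomial.eq_zero_of_infinite_isRoot
    apply Set.Infinite.mono (s := Set.range ((↑) : ℕ → ℚ))
    · rintro _ ⟨k, rfl⟩
      simp only [Polynomial.IsRoot, Polynomial.eval_add, Polynomial.eval_comp,
        Polynomial.eval_sub, Polynomial.eval_one, Polynomial.eval_X]
      exact key k
    · exact Set.infinite_range_of_injective Nat.cast_injective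
  have := congrArg (Polynomial.eval x) hpoly
  simp only [Polynomial.eval_add, Polynomial.eval_comp, Polynomial.eval_sub,
    Polynomial.eval_one, Polynomial.eval_X, Polynomial.eval_zero] at this
  linarith

theorem intPrime {p : ℕ} (hp' : p.Prime) : Prime (p : ℤ) := Nat.prime_iff_prime_int.mp hp'

theorem fermatDvd {p : ℕ} [hp : Fact p.Prime] {k : ℕ} (h : ¬ p ∣ k) :
    (p:ℤ) ∣ (k:ℤ)^(p-1) - 1 := by
  haveI : NeZero p := ⟨hp.out.ne_zero⟩
  have : (((k:ℤ)^(p-1) - 1 : ℤ) : ZMod p) = 0 := by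
    push_cast
    rw [ZMod.pow_card_sub_one_eq_one (by
      simpa [Ne, ZMod.natCast_eq_zero_iff] using h)]
    ring
  exact_mod_cast (ZMod.intCast_zmod_eq_zero_iff_dvd _ p).mp this

theorem termFermat {p : ℕ} [hp : Fact p.Prime] (hp3 : 3 < p) {k : ℕ} (hk1 : 0 < k) (hk2 : k < p) :
    ‖(((1:ℚ)/(k:ℚ)^2 - (k:ℚ)^(p-3) : ℚ) : ℚ_[p])‖ ≤ (p:ℝ)⁻¹ := by
  have hpk : ¬ p ∣ k := fun hd => by have := Nat.le_of_dvd hk1 hd; omega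
  obtain ⟨c, hc⟩ := fermatDvd (p := p) hpk
  have hk0 : (k:ℚ) ≠ 0 := by positivity
  refine normRatLeInv p (a := -c) (b := (k:ℤ)^2) ?_ ?_
  · have hke : (k:ℚ)^(p-3) * (k:ℚ)^2 = (k:ℚ)^(p-1) := by
      rw [← pow_add]; congr 1; omega
    have hcq : ((k:ℚ))^(p-1) - 1 = (p:ℚ) * (c:ℚ) := by exact_mod_cast hc
    push_cast
    field_simp
    linear_combination -hcq - hke
  · intro hd
    have : (p:ℤ) ∣ (k:ℤ) := (intPrime hp.out).dvd_of_dvd_pow hd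
    exact hpk (by exact_mod_cast this)

theorem keyCoeff {p : ℕ} [hp : Fact p.Prime] (hp3 : 3 < p) :
    ‖((2 * 3^(p-3) / ((p:ℚ) - 2) + 1/9 : ℚ) : ℚ_[p])‖ ≤ (p:ℝ)⁻¹ := by
  have h3 : ¬ p ∣ 3 := fun hd => by
    have := Nat.le_of_dvd (by norm_num) hd; omega
  obtain ⟨c, hc⟩ := fermatDvd (p := p) (k := 3) h3
  refine normRatLeInv p (a := 2*c + 1) (b := 9 * ((p:ℤ) - 2)) ?_ ?_
  · have hp2 : ((p:ℚ)) - 2 ≠ 0 := by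
      have : (2:ℚ) < p := by exact_mod_cast (by omega : 2 < p)
      linarith
    have h9 : (18:ℚ) * 3^(p-3) = 2 * 3^(p-1) := by
      have : (3:ℚ)^(p-1) = 3^(p-3) * 3^2 := by rw [← pow_add]; congr 1; omega
      rw [this]; ring
    have hcq : ((3:ℚ))^(p-1) - 1 = (p:ℚ) * (c:ℚ) := by
      have : (((3:ℕ):ℚ))^(p-1) - 1 = (p:ℚ) * (c:ℚ) := by exact_mod_cast hc
      simpa using this
    push_cast
    field_simp
    linear_combination h9 + 2*hcq
  · intro hd
    rcases ((intPrime hp.out).dvd_mul.mp hd) with h | h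
    · have h32 : (p:ℤ) ∣ 3^2 := by norm_num; exact h
      have h33 : (p:ℤ) ∣ 3 := (intPrime hp.out).dvd_of_dvd_pow h32
      have := Int.le_of_dvd (by norm_num) h33
      omega
    · have h2 : (p:ℤ) ∣ 2 := by
        have := dvd_sub (dvd_refl (p:ℤ)) h
        simpa using this
      have := Int.le_of_dvd (by norm_num) h2
      omega

theorem leg1 (p : ℕ) [Fact p.Prime] (h : p % 3 = 1) : legendreSym 3 (p:ℤ) = 1 := by
  rw [legendreSym.mod]
  have : ((p:ℤ) % (3:ℕ)) = 1 := by push_cast; omega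
  rw [this]; decide

theorem leg2 (p : ℕ) [Fact p.Prime] (h : p % 3 = 2) : legendreSym 3 (p:ℤ) = -1 := by
  rw [legendreSym.mod]
  have : ((p:ℤ) % (3:ℕ)) = 2 := by push_cast; omega
  rw [this]; decide

theorem filterEqImageA (p a : ℕ) (hpa : p = 3*a+1) :
    (Finset.Ioo 0 p).filter (fun k => 3 ∣ k + p) = (range a).image (fun j => 2 + 3*j) := by
  ext k
  simp only [mem_filter, mem_Ioo, mem_image, mem_range]
  constructor
  · rintro ⟨⟨h1, h2⟩, h3⟩
    exact ⟨(k-2)/3, by omega, by omega⟩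
  · rintro ⟨j, hj, rfl⟩
    refine ⟨⟨by omega, by omega⟩, by omega⟩

theorem filterEqImageB (p b : ℕ) (hpb : p = 3*b+2) :
    (Finset.Ioo 0 p).filter (fun k => 3 ∣ k + p) = (range (b+1)).image (fun j => 1 + 3*j) := by
  ext k
  simp only [mem_filter, mem_Ioo, mem_image, mem_range]
  constructor
  · rintro ⟨⟨h1, h2⟩, h3⟩
    exact ⟨(k-1)/3, by omega, by omega⟩
  · rintro ⟨j, hj, rfl⟩
    refine ⟨⟨by omega, by omega⟩, by omega⟩

theorem sumImageAffine (t n : ℕ) (g : ℕ → ℚ) :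
    ∑ k ∈ (range n).image (fun j => t + 3*j), g k = ∑ j ∈ range n, g (t + 3*j) := by
  rw [Finset.sum_image]
  intro x _ y _ h
  simp only at h
  omega

theorem powerSumFormula (p : ℕ) (hp3 : 3 < p) (t n : ℕ) :
    ∑ j ∈ range n, ((t + 3*j : ℕ) : ℚ)^(p-3)
      = 3^(p-3) / ((p:ℚ) - 2) *
        ((Polynomial.bernoulli (p-2)).eval ((t:ℚ)/3 + n) - (Polynomial.bernoulli (p-2)).eval ((t:ℚ)/3)) := by
  have hm : p - 3 + 1 = p - 2 := by omega
  have h := bernoulliEvalAddNat (p-3) ((t:ℚ)/3) n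
  rw [hm] at h
  have hterm : ∀ j : ℕ, ((t + 3*j : ℕ) : ℚ)^(p-3) = 3^(p-3) * ((t:ℚ)/3 + j)^(p-3) := by
    intro j
    rw [← mul_pow]
    congr 1
    push_cast; ring
  rw [Finset.sum_congr rfl (fun j _ => hterm j), ← Finset.mul_sum]
  have hcast : ((p - 3 : ℕ) : ℚ) + 1 = (p:ℚ) - 2 := by
    push_cast [Nat.cast_sub (by omega : 3 ≤ p)]
    ring
  rw [hcast] at h
  have hne : (p:ℚ) - 2 ≠ 0 := by
    have : (2:ℚ) < p := by exact_mod_cast (by omega : 2 < p)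
    linarith
  rw [h]
  field_simp
  ring

end Aux

theorem sum_inv_sq_three_dvd_congruence (p : ℕ) [hp : Fact p.Prime] (hp3 : 3 < p) :
    ‖(((∑ k ∈ (Finset.Ioo 0 p).filter (fun k => 3 ∣ k + p), (1 : ℚ) / (k : ℚ) ^ 2)
        + 1 / 9 * (legendreSym 3 p : ℚ)
            * (Polynomial.bernoulli (p - 2)).eval (1 / 3 : ℚ) : ℚ) : ℚ_[p])‖
      ≤ ((p : ℝ))⁻¹ := by
  have hp' := hp.out
  set F := (Finset.Ioo 0 p).filter (fun k => 3 ∣ k + p) with hF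
  set E : ℚ → ℚ := fun x => (Polynomial.bernoulli (p-2)).eval x with hE
  set c : ℚ := 3^(p-3) / ((p:ℚ) - 2) with hc
  have hpodd : p % 2 = 1 := Nat.odd_iff.mp (hp'.odd_of_ne_two (by omega))
  have hodd : Odd (p - 2) := Nat.odd_iff.mpr (by omega)
  have hrefl : E (2/3) = - E (1/3) := by
    have := bernoulliEvalOneSubOdd hodd (1/3 : ℚ)
    rw [show (1:ℚ) - 1/3 = 2/3 by norm_num] at this
    exact this
  have hd3 : ¬ p ∣ 3 := fun hd => by have := Nat.le_of_dvd (by norm_num) hd; omega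
  have hn3 : ‖((3:ℕ) : ℚ_[p])‖ = 1 := normNatUnit p hd3
  have hn3' : ‖((3:ℚ_[p]))‖ = 1 := by exact_mod_cast hn3
  -- norms of x/3 type rationals
  have hdiv3 : ∀ k : ℕ, ‖(((k:ℚ)/3 : ℚ) : ℚ_[p])‖ ≤ 1 := by
    intro k
    rw [show (((k:ℚ)/3 : ℚ) : ℚ_[p]) = ((k:ℕ) : ℚ_[p]) / 3 by push_cast; ring,
      norm_div, hn3', div_one]
    exact normNatLeOne k
  have h13 : ‖((1/3 : ℚ) : ℚ_[p])‖ ≤ 1 := by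
    have := hdiv3 1; simpa using this
  have h23 : ‖((2/3 : ℚ) : ℚ_[p])‖ ≤ 1 := by
    have := hdiv3 2
    rw [show ((2:ℕ):ℚ) = 2 from by norm_num] at this
    exact this
  have hpdiv3 : ‖(((p:ℚ)/3 : ℚ) : ℚ_[p])‖ ≤ (p:ℝ)⁻¹ := by
    rw [show (((p:ℚ)/3 : ℚ) : ℚ_[p]) = (p : ℚ_[p]) / 3 by push_cast; ring,
      norm_div, hn3', div_one, Padic.norm_p]
  -- norm of c
  have hnormc : ‖((c : ℚ) : ℚ_[p])‖ ≤ 1 := by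
    rw [hc, show ((3^(p-3) / ((p:ℚ) - 2) : ℚ) : ℚ_[p]) = ((3:ℚ_[p]))^(p-3) / ((p:ℚ_[p]) - 2) by
      push_cast; ring, norm_div, norm_pow, hn3', one_pow]
    have hden : ((p:ℚ_[p]) - 2) = ((p - 2 : ℕ) : ℚ_[p]) := by
      rw [Nat.cast_sub (by omega : 2 ≤ p)]; push_cast; ring
    rw [hden, normNatUnit p (fun hd => by have := Nat.le_of_dvd (by omega) hd; omega)]
    norm_num
  -- step 1 : replace 1/k^2 by k^(p-3)
  have hSP : ‖(((∑ k ∈ F, (1:ℚ)/(k:ℚ)^2) - ∑ k ∈ F, ((k:ℚ))^(p-3) : ℚ) : ℚ_[p])‖ ≤ (p:ℝ)⁻¹ := by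
    rw [← Finset.sum_sub_distrib]
    rw [show ((∑ k ∈ F, ((1:ℚ)/(k:ℚ)^2 - ((k:ℚ))^(p-3)) : ℚ) : ℚ_[p])
        = ∑ k ∈ F, (((1:ℚ)/(k:ℚ)^2 - ((k:ℚ))^(p-3) : ℚ) : ℚ_[p]) by push_cast; ring]
    refine norm_sum_le_of_forall_le_of_nonneg (by positivity) ?_
    intro k hk
    rw [hF, mem_filter, mem_Ioo] at hk
    exact termFermat hp3 hk.1.1 hk.1.2
  -- the two cases
  have h3 : p % 3 = 1 ∨ p % 3 = 2 := by
    have hnd : ¬ 3 ∣ p := fun h => by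
      have := (Nat.prime_dvd_prime_iff_eq (by norm_num) hp').mp h
      omega
    omega
  have key : ∀ u v : ℚ, E u = - E (1/3) → ‖((u - (v - (p:ℚ)/3) : ℚ) : ℚ_[p])‖ = 0 → True := fun _ _ _ _ => trivial
  rcases h3 with hmod | hmod
  · -- p = 3a+1, legendre = 1
    obtain ⟨a, hpa⟩ : ∃ a, p = 3*a+1 := ⟨p/3, by omega⟩
    have hleg : (legendreSym 3 (p:ℤ) : ℚ) = 1 := by rw [leg1 p hmod]; norm_num
    have hP : ∑ k ∈ F, ((k:ℚ))^(p-3) = c * (E ((2:ℚ)/3 + a) - E (2/3)) := by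
      rw [hF, filterEqImageA p a hpa, sumImageAffine 2 a (fun k => ((k:ℚ))^(p-3))]
      have := powerSumFormula p hp3 2 a
      rw [show ((2:ℕ):ℚ)/3 = (2:ℚ)/3 by norm_num] at this
      exact this
    have hup : (2:ℚ)/3 + a = 1/3 + (p:ℚ)/3 := by
      have : (p:ℚ) = 3*a+1 := by exact_mod_cast congrArg (Nat.cast : ℕ → ℚ) hpa
      rw [this]; ring
    have hXeq : (∑ k ∈ F, (1:ℚ)/(k:ℚ)^2) + 1/9 * (legendreSym 3 (p:ℤ) : ℚ) * E (1/3)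
        = ((∑ k ∈ F, (1:ℚ)/(k:ℚ)^2) - ∑ k ∈ F, ((k:ℚ))^(p-3))
          + (c * (E (1/3 + (p:ℚ)/3) - E (1/3)) + (2 * c + 1/9) * E (1/3)) := by
      rw [hleg, hP, hup, hrefl]; ring
    rw [hXeq, Rat.cast_add]
    refine (norm_add_le_max _ _).trans (max_le hSP ?_)
    rw [Rat.cast_add]
    refine (norm_add_le_max _ _).trans (max_le ?_ ?_)
    · rw [Rat.cast_mul, norm_mul]
      have hd : ‖((E (1/3 + (p:ℚ)/3) - E (1/3) : ℚ) : ℚ_[p])‖ ≤ (p:ℝ)⁻¹ := by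
        refine normBpolyEvalSubLe le_rfl ?_ h13 ?_
        · rw [show ((1/3 + (p:ℚ)/3 : ℚ)) = ((p+1 : ℕ) : ℚ)/3 by push_cast; ring]
          exact hdiv3 (p+1)
        · rw [show ((1/3 + (p:ℚ)/3 - 1/3 : ℚ)) = (p:ℚ)/3 by ring]
          exact hpdiv3
      calc ‖((c:ℚ) : ℚ_[p])‖ * ‖((E (1/3 + (p:ℚ)/3) - E (1/3) : ℚ) : ℚ_[p])‖
          ≤ 1 * (p:ℝ)⁻¹ := mul_le_mul hnormc hd (norm_nonneg _) zero_le_one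
        _ = (p:ℝ)⁻¹ := one_mul _
    · rw [Rat.cast_mul, norm_mul]
      have hkc : ‖((2 * c + 1/9 : ℚ) : ℚ_[p])‖ ≤ (p:ℝ)⁻¹ := by
        rw [show (2 * c + 1/9 : ℚ) = 2 * 3^(p-3) / ((p:ℚ) - 2) + 1/9 by rw [hc]; ring]
        exact keyCoeff hp3
      have hb : ‖((E (1/3) : ℚ) : ℚ_[p])‖ ≤ 1 := normBpolyEvalLe le_rfl h13
      calc ‖((2 * c + 1/9 : ℚ) : ℚ_[p])‖ * ‖((E (1/3) : ℚ) : ℚ_[p])‖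
          ≤ (p:ℝ)⁻¹ * 1 := mul_le_mul hkc hb (norm_nonneg _) (by positivity)
        _ = (p:ℝ)⁻¹ := mul_one _
  · -- p = 3b+2, legendre = -1
    obtain ⟨b, hpb⟩ : ∃ b, p = 3*b+2 := ⟨p/3, by omega⟩
    have hleg : (legendreSym 3 (p:ℤ) : ℚ) = -1 := by rw [leg2 p hmod]; norm_num
    have hP : ∑ k ∈ F, ((k:ℚ))^(p-3) = c * (E ((1:ℚ)/3 + (b+1:ℕ)) - E (1/3)) := by
      rw [hF, filterEqImageB p b hpb, sumImageAffine 1 (b+1) (fun k => ((k:ℚ))^(p-3))]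
      have := powerSumFormula p hp3 1 (b+1)
      rw [show ((1:ℕ):ℚ)/3 = (1:ℚ)/3 by norm_num] at this
      exact this
    have hup : (1:ℚ)/3 + ((b+1:ℕ):ℚ) = 2/3 + (p:ℚ)/3 := by
      have : (p:ℚ) = 3*b+2 := by exact_mod_cast congrArg (Nat.cast : ℕ → ℚ) hpb
      rw [this]; push_cast; ring
    have hXeq : (∑ k ∈ F, (1:ℚ)/(k:ℚ)^2) + 1/9 * (legendreSym 3 (p:ℤ) : ℚ) * E (1/3)
        = ((∑ k ∈ F, (1:ℚ)/(k:ℚ)^2) - ∑ k ∈ F, ((k:ℚ))^(p-3))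
          + (c * (E (2/3 + (p:ℚ)/3) - E (2/3)) + (-(2 * c + 1/9)) * E (1/3)) := by
      rw [hleg, hP, hup, hrefl]; ring
    rw [hXeq, Rat.cast_add]
    refine (norm_add_le_max _ _).trans (max_le hSP ?_)
    rw [Rat.cast_add]
    refine (norm_add_le_max _ _).trans (max_le ?_ ?_)
    · rw [Rat.cast_mul, norm_mul]
      have hd : ‖((E (2/3 + (p:ℚ)/3) - E (2/3) : ℚ) : ℚ_[p])‖ ≤ (p:ℝ)⁻¹ := by
        refine normBpolyEvalSubLe le_rfl ?_ h23 ?_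
        · rw [show ((2/3 + (p:ℚ)/3 : ℚ)) = ((p+2 : ℕ) : ℚ)/3 by push_cast; ring]
          exact hdiv3 (p+2)
        · rw [show ((2/3 + (p:ℚ)/3 - 2/3 : ℚ)) = (p:ℚ)/3 by ring]
          exact hpdiv3
      calc ‖((c:ℚ) : ℚ_[p])‖ * ‖((E (2/3 + (p:ℚ)/3) - E (2/3) : ℚ) : ℚ_[p])‖
          ≤ 1 * (p:ℝ)⁻¹ := mul_le_mul hnormc hd (norm_nonneg _) zero_le_one
        _ = (p:ℝ)⁻¹ := one_mul _
    · rw [Rat.cast_mul, norm_mul]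
      have hkc : ‖((-(2 * c + 1/9) : ℚ) : ℚ_[p])‖ ≤ (p:ℝ)⁻¹ := by
        rw [show ((-(2 * c + 1/9) : ℚ) : ℚ_[p]) = -(((2 * c + 1/9 : ℚ)) : ℚ_[p]) by push_cast; ring,
          norm_neg]
        rw [show (2 * c + 1/9 : ℚ) = 2 * 3^(p-3) / ((p:ℚ) - 2) + 1/9 by rw [hc]; ring]
        exact keyCoeff hp3
      have hb2 : ‖((E (1/3) : ℚ) : ℚ_[p])‖ ≤ 1 := normBpolyEvalLe le_rfl h13
      calc ‖((-(2 * c + 1/9) : ℚ) : ℚ_[p])‖ * ‖((E (1/3) : ℚ) : ℚ_[p])‖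
          ≤ (p:ℝ)⁻¹ * 1 := mul_le_mul hkc hb2 (norm_nonneg _) (by positivity)
        _ = (p:ℝ)⁻¹ := mul_one _
end

section
/- Let p > 3 be a prime. Then Σ_{j=1}^{⌊(p−1)/3⌋} 1/j^2 ≡ (1/2) · (p/3) · B_{p−2}(1/3) (mod p), i.e., the p-adic valuation of the rational number Σ_{j=1}^{⌊(p−1)/3⌋} 1/j^2 − (1/2)(p/3)B_{p−2}(1/3) is at least 1. -/
open Polynomial Finset

noncomputable def Ee (p : ℕ) [Fact p.Prime] (x : ℚ_[p]) : ℚ_[p] :=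
  ∑ i ∈ Finset.range (p-1),
    ((_root_.bernoulli i : ℚ) : ℚ_[p]) * (((p-2).choose i : ℕ) : ℚ_[p]) * x^(p-2-i)

variable {p : ℕ} [hp : Fact p.Prime]

theorem pnorm_sum_le {ι : Type*} (s : Finset ι) (f : ι → ℚ_[p]) (C : ℝ) (hC : 0 ≤ C)
    (h : ∀ i ∈ s, ‖f i‖ ≤ C) : ‖∑ i ∈ s, f i‖ ≤ C := by
  induction s using Finset.cons_induction with
  | empty => simpa using hC
  | cons a s ha ih =>
    rw [Finset.sum_cons]
    refine le_trans (Padic.nonarchimedean _ _) (max_le (h a (Finset.mem_cons_self a s)) ?_)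
    exact ih fun i hi => h i (Finset.mem_cons_of_mem hi)

theorem pnorm_nat_one {n : ℕ} (hn : ¬ p ∣ n) : ‖((n : ℕ) : ℚ_[p])‖ = 1 := by
  refine le_antisymm (by exact_mod_cast Padic.norm_int_le_one (n : ℤ)) ?_
  by_contra hlt
  push_neg at hlt
  have : ‖((n : ℤ) : ℚ_[p])‖ < 1 := by exact_mod_cast hlt
  rw [Padic.norm_intCast_lt_one_iff] at this
  exact hn (by exact_mod_cast this)

theorem pnorm_bernoulli_le (k : ℕ) (hk : k + 1 < p) :
    ‖((_root_.bernoulli k : ℚ) : ℚ_[p])‖ ≤ 1 := by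
  induction k using Nat.strong_induction_on with
  | _ k ih =>
    match k, hk with
    | 0, _ => simp
    | Nat.succ k, hk =>
      have hs := _root_.sum_bernoulli (k + 2)
      rw [if_neg (by omega), Finset.sum_range_succ] at hs
      have hc : ((k+2).choose (k+1) : ℚ) = (k + 2 : ℚ) := by
        rw [Nat.choose_succ_self_right]; push_cast; ring
      rw [hc] at hs
      have heq : (k + 2 : ℚ) * _root_.bernoulli (k+1)
          = - ∑ i ∈ Finset.range (k+1), ((k+2).choose i : ℚ) * _root_.bernoulli i := by
        linarith [hs]
      have hne : ¬ p ∣ (k + 2) := by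
        intro hdvd
        have := Nat.le_of_dvd (by omega) hdvd
        omega
      have hnorm : ‖((k + 2 : ℚ) : ℚ_[p])‖ = 1 := by
        have : ((k + 2 : ℚ) : ℚ_[p]) = ((k + 2 : ℕ) : ℚ_[p]) := by push_cast; ring
        rw [this]; exact pnorm_nat_one hne
      have : ‖(((k + 2 : ℚ) * _root_.bernoulli (k+1) : ℚ) : ℚ_[p])‖ ≤ 1 := by
        rw [heq]
        push_cast
        rw [norm_neg]
        refine pnorm_sum_le _ _ _ zero_le_one fun i hi => ?_
        rw [norm_mul]
        have h1 : ‖(((k+2).choose i : ℚ) : ℚ_[p])‖ ≤ 1 := by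
          exact_mod_cast Padic.norm_int_le_one (((k+2).choose i : ℤ))
        have h2 : ‖((_root_.bernoulli i : ℚ) : ℚ_[p])‖ ≤ 1 := by
          refine ih i (by have := Finset.mem_range.mp hi; omega : i < k.succ) ?_
          have := Finset.mem_range.mp hi
          omega
        calc ‖(((k+2).choose i : ℚ) : ℚ_[p])‖ * ‖((_root_.bernoulli i : ℚ) : ℚ_[p])‖
            ≤ 1 * 1 := mul_le_mul h1 h2 (norm_nonneg _) zero_le_one
          _ = 1 := by ring
      rw [Rat.cast_mul, norm_mul, hnorm, one_mul] at this
      exact this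

theorem fermat_norm {j : ℕ} (hj : ¬ p ∣ j) : ‖((j : ℚ_[p]))^(p-1) - 1‖ ≤ ((p:ℝ))⁻¹ := by
  have h1 : ((j : ℚ_[p]))^(p-1) - 1 = (((j^(p-1) - 1 : ℤ)) : ℚ_[p]) := by push_cast; ring
  rw [h1, ← zpow_neg_one]
  have : ((p : ℝ))^(-1 : ℤ) = ((p:ℝ))^(-(1:ℕ) : ℤ) := by norm_num
  rw [this, Padic.norm_int_le_pow_iff_dvd, pow_one]
  have hz : (((j:ℤ)^(p-1) - 1 : ℤ) : ZMod p) = 0 := by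
    push_cast
    rw [ZMod.pow_card_sub_one_eq_one]
    · ring
    · simpa [Ne, ZMod.natCast_eq_zero_iff] using hj
  exact_mod_cast (ZMod.intCast_zmod_eq_zero_iff_dvd _ p).mp hz

theorem pow_cong {x y : ℚ_[p]} (hx : ‖x‖ ≤ 1) (hy : ‖y‖ ≤ 1)
    (h : ‖x - y‖ ≤ ((p:ℝ))⁻¹) (n : ℕ) : ‖x^n - y^n‖ ≤ ((p:ℝ))⁻¹ := by
  induction n with
  | zero => simpa using inv_nonneg.mpr (Nat.cast_nonneg p)
  | succ n ih =>
    have key : x^(n+1) - y^(n+1) = x * (x^n - y^n) + (x - y) * y^n := by ring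
    rw [key]
    refine le_trans (Padic.nonarchimedean _ _) (max_le ?_ ?_)
    · rw [norm_mul]
      calc ‖x‖ * ‖x^n - y^n‖ ≤ 1 * ((p:ℝ))⁻¹ :=
          mul_le_mul hx ih (norm_nonneg _) zero_le_one
        _ = ((p:ℝ))⁻¹ := one_mul _
    · rw [norm_mul]
      have hyn : ‖y^n‖ ≤ 1 := by
        rw [norm_pow]
        exact pow_le_one₀ (norm_nonneg _) hy
      calc ‖x - y‖ * ‖y^n‖ ≤ ((p:ℝ))⁻¹ * 1 :=
          mul_le_mul h hyn (norm_nonneg _) (inv_nonneg.mpr (Nat.cast_nonneg p))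
        _ = ((p:ℝ))⁻¹ := mul_one _

theorem leg_one' (h : p % 3 = 1) : legendreSym 3 (p:ℤ) = 1 := by
  haveI : Fact (Nat.Prime 3) := ⟨by norm_num⟩
  rw [legendreSym.mod]
  have h2 : (p:ℤ) % (3:ℕ) = 1 := by push_cast; omega
  rw [h2, legendreSym.at_one]

theorem leg_two' (h : p % 3 = 2) : legendreSym 3 (p:ℤ) = -1 := by
  haveI : Fact (Nat.Prime 3) := ⟨by norm_num⟩
  rw [legendreSym.mod]
  have h2 : (p:ℤ) % (3:ℕ) = 2 := by push_cast; omega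
  rw [h2]
  decide

theorem evalE (hp3 : 3 < p) (q : ℚ) :
    (((Polynomial.bernoulli (p-2)).eval q : ℚ) : ℚ_[p]) = Ee p (q : ℚ_[p]) := by
  have h : p - 2 + 1 = p - 1 := by omega
  rw [Polynomial.bernoulli, eval_finset_sum, Ee, ← h]
  push_cast
  refine Finset.sum_congr rfl fun i _ => ?_
  rw [eval_monomial]
  push_cast
  ring

theorem Ee_bound (hp3 : 3 < p) {x : ℚ_[p]} (hx : ‖x‖ ≤ 1) : ‖Ee p x‖ ≤ 1 := by
  refine pnorm_sum_le _ _ _ zero_le_one fun i hi => ?_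
  rw [norm_mul, norm_mul]
  have h1 : ‖((_root_.bernoulli i : ℚ) : ℚ_[p])‖ ≤ 1 :=
    pnorm_bernoulli_le i (by have := Finset.mem_range.mp hi; omega)
  have h2 : ‖(((p-2).choose i : ℕ) : ℚ_[p])‖ ≤ 1 := by
    exact_mod_cast Padic.norm_int_le_one (((p-2).choose i : ℤ))
  have h3 : ‖x ^ (p-2-i)‖ ≤ 1 := by
    rw [norm_pow]; exact pow_le_one₀ (norm_nonneg _) hx
  calc ‖((_root_.bernoulli i : ℚ) : ℚ_[p])‖ * ‖(((p-2).choose i : ℕ) : ℚ_[p])‖ * ‖x ^ (p-2-i)‖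
      ≤ 1 * 1 * 1 := by
        refine mul_le_mul (mul_le_mul h1 h2 (norm_nonneg _) zero_le_one) h3 (norm_nonneg _) ?_
        positivity
    _ = 1 := by ring

theorem Ee_cong (hp3 : 3 < p) {x y : ℚ_[p]} (hx : ‖x‖ ≤ 1) (hy : ‖y‖ ≤ 1)
    (h : ‖x - y‖ ≤ ((p:ℝ))⁻¹) : ‖Ee p x - Ee p y‖ ≤ ((p:ℝ))⁻¹ := by
  have hinv : (0:ℝ) ≤ ((p:ℝ))⁻¹ := inv_nonneg.mpr (Nat.cast_nonneg p)
  rw [Ee, Ee, ← Finset.sum_sub_distrib]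
  refine pnorm_sum_le _ _ _ hinv fun i hi => ?_
  have hterm : ((_root_.bernoulli i : ℚ) : ℚ_[p]) * (((p-2).choose i : ℕ) : ℚ_[p]) * x^(p-2-i)
      - ((_root_.bernoulli i : ℚ) : ℚ_[p]) * (((p-2).choose i : ℕ) : ℚ_[p]) * y^(p-2-i)
      = ((_root_.bernoulli i : ℚ) : ℚ_[p]) * (((p-2).choose i : ℕ) : ℚ_[p])
        * (x^(p-2-i) - y^(p-2-i)) := by ring
  rw [hterm, norm_mul, norm_mul]
  have h1 : ‖((_root_.bernoulli i : ℚ) : ℚ_[p])‖ ≤ 1 :=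
    pnorm_bernoulli_le i (by have := Finset.mem_range.mp hi; omega)
  have h2 : ‖(((p-2).choose i : ℕ) : ℚ_[p])‖ ≤ 1 := by
    exact_mod_cast Padic.norm_int_le_one (((p-2).choose i : ℤ))
  have h3 := pow_cong hx hy h (p-2-i)
  calc ‖((_root_.bernoulli i : ℚ) : ℚ_[p])‖ * ‖(((p-2).choose i : ℕ) : ℚ_[p])‖
        * ‖x^(p-2-i) - y^(p-2-i)‖
      ≤ 1 * 1 * ((p:ℝ))⁻¹ := by
        refine mul_le_mul (mul_le_mul h1 h2 (norm_nonneg _) zero_le_one) h3 (norm_nonneg _) ?_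
        positivity
    _ = ((p:ℝ))⁻¹ := by ring

theorem bern_comp_one_sub (n : ℕ) :
    (Polynomial.bernoulli n).comp (1 - X) = ((-1 : ℚ) ^ n) • Polynomial.bernoulli n := by
  induction n using Nat.strong_induction_on with
  | _ n ih =>
    match n with
    | 0 => simp
    | Nat.succ n =>
      have hd : derivative ((Polynomial.bernoulli (n+1)).comp (1 - X)
          - ((-1 : ℚ) ^ (n+1)) • Polynomial.bernoulli (n+1)) = 0 := by
        rw [derivative_sub, derivative_comp_one_sub_X, derivative_smul,
          derivative_bernoulli_add_one, mul_comp, ih n (Nat.lt_succ_self n)]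
        have h2 : ((n : ℚ[X]) + 1).comp (1 - X) = (n : ℚ[X]) + 1 := by simp
        rw [h2]
        simp only [smul_eq_C_mul, pow_succ, map_mul, map_pow, map_neg, map_one]
        ring
      have h0 := eq_C_of_derivative_eq_zero hd
      have h1 : ((Polynomial.bernoulli (n+1)).comp (1 - X)
          - ((-1 : ℚ) ^ (n+1)) • Polynomial.bernoulli (n+1)).eval 1 = 0 := by
        simp only [eval_sub, eval_comp, eval_smul, eval_sub, eval_one, eval_X, sub_self,
          bernoulli_eval_zero, bernoulli_eval_one, bernoulli'_eq_bernoulli, smul_eq_mul,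
          ← mul_assoc, ← pow_add]
        rw [Even.neg_one_pow ⟨n+1, by ring⟩, one_mul, sub_self]
      rw [h0] at h1
      rw [eval_C] at h1
      rw [h1, map_zero, sub_eq_zero] at h0
      exact h0

theorem sum_inv_sq_third_congruence (p : ℕ) [hp : Fact p.Prime] (hp3 : 3 < p) :
    ‖(((∑ j ∈ Finset.Icc 1 ((p - 1) / 3), (1 : ℚ) / (j : ℚ) ^ 2)
        - 1 / 2 * (legendreSym 3 p : ℚ)
            * (Polynomial.bernoulli (p - 2)).eval (1 / 3 : ℚ) : ℚ) : ℚ_[p])‖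
      ≤ ((p : ℝ))⁻¹ := by
  have hprime := hp.out
  have hp5 : 5 ≤ p := by
    by_contra hlt
    push_neg at hlt
    interval_cases p
    · exact absurd hprime (by norm_num)
  have hpodd : p % 2 = 1 := Nat.odd_iff.mp (hprime.odd_of_ne_two (by omega))
  have hmod3 : p % 3 = 1 ∨ p % 3 = 2 := by
    have h3d : ¬ (3 ∣ p) := by
      intro h
      rcases (Nat.Prime.eq_one_or_self_of_dvd hprime 3 h) with h1 | h1 <;> omega
    omega
  set m := (p-1)/3 with hm
  have hinv : (0:ℝ) ≤ ((p:ℝ))⁻¹ := inv_nonneg.mpr (Nat.cast_nonneg p)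
  have hmlt : m < p := by omega
  -- norms of small numbers
  have h2n : ‖(2:ℚ_[p])‖ = 1 := by
    have := pnorm_nat_one (p := p) (n := 2)
      (fun h => by have := Nat.le_of_dvd (by norm_num) h; omega)
    simpa using this
  have h3n : ‖(3:ℚ_[p])‖ = 1 := by
    have := pnorm_nat_one (p := p) (n := 3)
      (fun h => by have := Nat.le_of_dvd (by norm_num) h; omega)
    simpa using this
  have h3ne : (3:ℚ_[p]) ≠ 0 := by
    intro h0; rw [h0] at h3n; simp at h3n
  -- Bernoulli number vanishes
  have hodd2 : Odd (p-2) := Nat.odd_iff.mpr (by omega)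
  have hb0 : _root_.bernoulli (p-2) = 0 := by
    rw [bernoulli_eq_bernoulli'_of_ne_one (by omega)]
    exact bernoulli'_eq_zero_of_odd hodd2 (by omega)
  -- Faulhaber in ℚ
  have hFq : ((p:ℚ) - 2) * ∑ k ∈ Finset.range (m+1), (k:ℚ)^(p-3)
      = (Polynomial.bernoulli (p-2)).eval ((m+1 : ℕ) : ℚ) := by
    have h := Polynomial.sum_range_pow_eq_bernoulli_sub (m+1) (p-3)
    have hsucc : (p-3).succ = p-2 := by omega
    rw [hsucc, hb0, sub_zero] at h
    rw [← h]
    have : ((p - 3 : ℕ) : ℚ) = (p:ℚ) - 3 := by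
      push_cast [Nat.cast_sub (by omega : 3 ≤ p)]; ring
    rw [this]; ring
  -- Faulhaber in ℚ_[p]
  have hF : ((p:ℚ_[p]) - 2) * ∑ k ∈ Finset.range (m+1), (k:ℚ_[p])^(p-3)
      = Ee p ((m:ℚ_[p]) + 1) := by
    have h := congrArg (fun q : ℚ => (q : ℚ_[p])) hFq
    rw [evalE hp3] at h
    push_cast at h
    convert h using 2 <;> push_cast <;> ring
  -- sums over Icc vs range
  have hBsum : ∑ j ∈ Finset.Icc 1 m, (j:ℚ_[p])^(p-3)
      = ∑ j ∈ Finset.range (m+1), (j:ℚ_[p])^(p-3) := by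
    refine Finset.sum_subset ?_ ?_
    · intro x hx
      simp only [Finset.mem_Icc, Finset.mem_range] at *
      omega
    · intro x hx hnx
      simp only [Finset.mem_Icc, Finset.mem_range] at hx hnx
      have hx0 : x = 0 := by omega
      rw [hx0]
      simp only [Nat.cast_zero]
      exact zero_pow (by omega)
  have hF' : ((p:ℚ_[p]) - 2) * ∑ j ∈ Finset.Icc 1 m, (j:ℚ_[p])^(p-3)
      = Ee p ((m:ℚ_[p]) + 1) := by rw [hBsum]; exact hF
  -- step 1 : sum of inverse squares vs sum of powers
  have hAB : ‖(∑ j ∈ Finset.Icc 1 m, (1:ℚ_[p])/(j:ℚ_[p])^2)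
      - ∑ j ∈ Finset.Icc 1 m, (j:ℚ_[p])^(p-3)‖ ≤ ((p:ℝ))⁻¹ := by
    rw [← Finset.sum_sub_distrib]
    refine pnorm_sum_le _ _ _ hinv fun j hj => ?_
    have hjm := Finset.mem_Icc.mp hj
    have hpj : ¬ p ∣ j := by
      intro hd
      have := Nat.le_of_dvd (by omega) hd
      omega
    have hjn : ‖(j:ℚ_[p])‖ = 1 := pnorm_nat_one hpj
    have hj0 : (j:ℚ_[p]) ≠ 0 := by
      intro h0; rw [h0] at hjn; simp at hjn
    have hpow : (j:ℚ_[p])^(p-3) * (j:ℚ_[p])^2 = (j:ℚ_[p])^(p-1) := by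
      rw [← pow_add]; congr 1; omega
    have hident : (1:ℚ_[p])/(j:ℚ_[p])^2 - (j:ℚ_[p])^(p-3)
        = (1 - (j:ℚ_[p])^(p-1)) / (j:ℚ_[p])^2 := by
      rw [← hpow]; field_simp
    rw [hident, norm_div, norm_pow, hjn, one_pow, div_one, ← norm_neg, neg_sub]
    exact fermat_norm hpj
  -- unit u
  have hpd : ¬ p ∣ (p-2) := by
    intro h
    have := Nat.le_of_dvd (by omega) h
    omega
  have hpm2 : ((p:ℚ_[p]) - 2) = ((p-2 : ℕ) : ℚ_[p]) := by
    push_cast [Nat.cast_sub (by omega : 2 ≤ p)]; ring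
  have hun : ‖2*((p:ℚ_[p])-2)‖ = 1 := by
    rw [norm_mul, h2n, hpm2, pnorm_nat_one hpd, one_mul]
  -- norm bounds on Ee arguments
  have hM1 : ‖(m:ℚ_[p]) + 1‖ ≤ 1 := by
    have : (m:ℚ_[p]) + 1 = ((m+1 : ℕ) : ℚ_[p]) := by push_cast; ring
    rw [this]
    exact_mod_cast Padic.norm_int_le_one ((m+1 : ℕ) : ℤ)
  have h13 : ‖(3:ℚ_[p])⁻¹‖ ≤ 1 := by rw [norm_inv, h3n]; norm_num
  have h23 : ‖(2:ℚ_[p])/3‖ ≤ 1 := by rw [norm_div, h2n, h3n]; norm_num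
  have he1b : ‖Ee p ((3:ℚ_[p])⁻¹)‖ ≤ 1 := Ee_bound hp3 h13
  -- reflection in ℚ_[p]
  have hq : (Polynomial.bernoulli (p-2)).eval (2/3 : ℚ)
      = - (Polynomial.bernoulli (p-2)).eval (1/3 : ℚ) := by
    have hcomp := congrArg (fun f : ℚ[X] => f.eval (1/3 : ℚ)) (bern_comp_one_sub (p-2))
    simp only [eval_comp, eval_smul, eval_sub, eval_one, eval_X, smul_eq_mul,
      Odd.neg_one_pow hodd2] at hcomp
    norm_num at hcomp
    linarith [hcomp]
  have he13 : (((Polynomial.bernoulli (p-2)).eval (1/3 : ℚ) : ℚ) : ℚ_[p])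
      = Ee p ((3:ℚ_[p])⁻¹) := by
    rw [evalE hp3]
    congr 1
    push_cast; ring
  have he23 : Ee p ((2:ℚ_[p])/3) = - Ee p ((3:ℚ_[p])⁻¹) := by
    have h := congrArg (fun q : ℚ => (q : ℚ_[p])) hq
    rw [evalE hp3] at h
    rw [show (((2:ℚ)/3:ℚ):ℚ_[p]) = (2:ℚ_[p])/3 by push_cast; ring] at h
    rw [Rat.cast_neg, he13] at h
    exact h
  -- final assembly, case split
  rcases hmod3 with h3 | h3
  · -- p ≡ 1 mod 3, legendre symbol = 1
    rw [leg_one' h3]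
    have hgoal : (((∑ j ∈ Finset.Icc 1 m, (1 : ℚ) / (j : ℚ) ^ 2)
        - 1 / 2 * ((1 : ℤ) : ℚ)
            * (Polynomial.bernoulli (p - 2)).eval (1 / 3 : ℚ) : ℚ) : ℚ_[p])
        = (∑ j ∈ Finset.Icc 1 m, (1:ℚ_[p])/(j:ℚ_[p])^2)
          - 2⁻¹ * Ee p ((3:ℚ_[p])⁻¹) := by
      push_cast
      rw [he13]
      ring
    rw [hgoal]
    -- key multiplication identity
    have hcast3 : (3:ℚ_[p]) * ((m:ℚ_[p])+1) = (p:ℚ_[p]) + 2 := by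
      have h31 : 3 * (m + 1) = p + 2 := by omega
      exact_mod_cast congrArg (fun n : ℕ => (n : ℚ_[p])) h31
    have hdiff : (m:ℚ_[p]) + 1 - (2:ℚ_[p])/3 = (p:ℚ_[p])/(3:ℚ_[p]) := by
      field_simp
      linear_combination hcast3
    have hecong : ‖Ee p ((m:ℚ_[p])+1) - Ee p ((2:ℚ_[p])/3)‖ ≤ ((p:ℝ))⁻¹ :=
      Ee_cong hp3 hM1 h23
        (by rw [hdiff, norm_div, Padic.norm_p, h3n, div_one])
    have hkey : (2*((p:ℚ_[p])-2))
        * ((∑ j ∈ Finset.Icc 1 m, (1:ℚ_[p])/(j:ℚ_[p])^2) - 2⁻¹ * Ee p ((3:ℚ_[p])⁻¹))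
        = (2*((p:ℚ_[p])-2)) * ((∑ j ∈ Finset.Icc 1 m, (1:ℚ_[p])/(j:ℚ_[p])^2)
            - ∑ j ∈ Finset.Icc 1 m, (j:ℚ_[p])^(p-3))
          + (2 * (Ee p ((m:ℚ_[p])+1) - Ee p ((2:ℚ_[p])/3))
            - (p:ℚ_[p]) * Ee p ((3:ℚ_[p])⁻¹)) := by
      linear_combination 2 * hF' + 2 * he23
    have hBT : ‖(∑ j ∈ Finset.Icc 1 m, (1:ℚ_[p])/(j:ℚ_[p])^2)
        - 2⁻¹ * Ee p ((3:ℚ_[p])⁻¹)‖ ≤ ((p:ℝ))⁻¹ := by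
      rw [show ‖(∑ j ∈ Finset.Icc 1 m, (1:ℚ_[p])/(j:ℚ_[p])^2)
          - 2⁻¹ * Ee p ((3:ℚ_[p])⁻¹)‖
        = ‖(2*((p:ℚ_[p])-2)) * ((∑ j ∈ Finset.Icc 1 m, (1:ℚ_[p])/(j:ℚ_[p])^2)
          - 2⁻¹ * Ee p ((3:ℚ_[p])⁻¹))‖ from by rw [norm_mul, hun, one_mul]]
      rw [hkey]
      refine le_trans (Padic.nonarchimedean _ _) (max_le ?_ ?_)
      · rw [norm_mul, hun, one_mul]
        exact hAB
      · rw [sub_eq_add_neg]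
        refine le_trans (Padic.nonarchimedean _ _) (max_le ?_ ?_)
        · rw [norm_mul, h2n, one_mul]
          exact hecong
        · rw [norm_neg, norm_mul, Padic.norm_p]
          calc ((p:ℝ))⁻¹ * ‖Ee p ((3:ℚ_[p])⁻¹)‖ ≤ ((p:ℝ))⁻¹ * 1 :=
              mul_le_mul_of_nonneg_left he1b hinv
            _ = ((p:ℝ))⁻¹ := mul_one _
    exact hBT
  · -- p ≡ 2 mod 3, legendre symbol = -1
    rw [leg_two' h3]
    have hgoal : (((∑ j ∈ Finset.Icc 1 m, (1 : ℚ) / (j : ℚ) ^ 2)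
        - 1 / 2 * ((-1 : ℤ) : ℚ)
            * (Polynomial.bernoulli (p - 2)).eval (1 / 3 : ℚ) : ℚ) : ℚ_[p])
        = (∑ j ∈ Finset.Icc 1 m, (1:ℚ_[p])/(j:ℚ_[p])^2)
          - (-(2⁻¹ * Ee p ((3:ℚ_[p])⁻¹))) := by
      push_cast
      rw [he13]
      ring
    rw [hgoal]
    have hcast3 : (3:ℚ_[p]) * ((m:ℚ_[p])+1) = (p:ℚ_[p]) + 1 := by
      have h31 : 3 * (m + 1) = p + 1 := by omega
      exact_mod_cast congrArg (fun n : ℕ => (n : ℚ_[p])) h31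
    have hdiff : (m:ℚ_[p]) + 1 - (3:ℚ_[p])⁻¹ = (p:ℚ_[p])/(3:ℚ_[p]) := by
      field_simp
      linear_combination hcast3
    have hecong : ‖Ee p ((m:ℚ_[p])+1) - Ee p ((3:ℚ_[p])⁻¹)‖ ≤ ((p:ℝ))⁻¹ :=
      Ee_cong hp3 hM1 h13
        (by rw [hdiff, norm_div, Padic.norm_p, h3n, div_one])
    have hkey : (2*((p:ℚ_[p])-2))
        * ((∑ j ∈ Finset.Icc 1 m, (1:ℚ_[p])/(j:ℚ_[p])^2) - (-(2⁻¹ * Ee p ((3:ℚ_[p])⁻¹))))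
        = (2*((p:ℚ_[p])-2)) * ((∑ j ∈ Finset.Icc 1 m, (1:ℚ_[p])/(j:ℚ_[p])^2)
            - ∑ j ∈ Finset.Icc 1 m, (j:ℚ_[p])^(p-3))
          + (2 * (Ee p ((m:ℚ_[p])+1) - Ee p ((3:ℚ_[p])⁻¹))
            + (p:ℚ_[p]) * Ee p ((3:ℚ_[p])⁻¹)) := by
      linear_combination 2 * hF'
    have hBT : ‖(∑ j ∈ Finset.Icc 1 m, (1:ℚ_[p])/(j:ℚ_[p])^2)
        - (-(2⁻¹ * Ee p ((3:ℚ_[p])⁻¹)))‖ ≤ ((p:ℝ))⁻¹ := by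
      rw [show ‖(∑ j ∈ Finset.Icc 1 m, (1:ℚ_[p])/(j:ℚ_[p])^2)
          - (-(2⁻¹ * Ee p ((3:ℚ_[p])⁻¹)))‖
        = ‖(2*((p:ℚ_[p])-2)) * ((∑ j ∈ Finset.Icc 1 m, (1:ℚ_[p])/(j:ℚ_[p])^2)
          - (-(2⁻¹ * Ee p ((3:ℚ_[p])⁻¹))))‖ from by rw [norm_mul, hun, one_mul]]
      rw [hkey]
      refine le_trans (Padic.nonarchimedean _ _) (max_le ?_ ?_)
      · rw [norm_mul, hun, one_mul]
        exact hAB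
      · refine le_trans (Padic.nonarchimedean _ _) (max_le ?_ ?_)
        · rw [norm_mul, h2n, one_mul]
          exact hecong
        · rw [norm_mul, Padic.norm_p]
          calc ((p:ℝ))⁻¹ * ‖Ee p ((3:ℚ_[p])⁻¹)‖ ≤ ((p:ℝ))⁻¹ * 1 :=
              mul_le_mul_of_nonneg_left he1b hinv
            _ = ((p:ℝ))⁻¹ := mul_one _
    exact hBT
end

section
/- For every n ∈ ℕ, one has a_n = Σ_{k=0}^{n} C(n+k,2k)·C(n−k,k)·C(2k,k) and also a_n = Σ_{k=0}^{n} C(n+k,3k)·C(3k,k)·C(2k,k). -/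
/-- The sequence `a_n = ∑_{k=0}^n C(n,k) C(n-k,k) C(n+k,k)`. -/
def seqA (n : ℕ) : ℕ :=
  ∑ k ∈ Finset.range (n + 1), Nat.choose n k * Nat.choose (n - k) k * Nat.choose (n + k) k

theorem seqA_alternative_forms (n : ℕ) :
    (seqA n = ∑ k ∈ Finset.range (n + 1),
        Nat.choose (n + k) (2 * k) * Nat.choose (n - k) k * Nat.choose (2 * k) k) ∧
    (seqA n = ∑ k ∈ Finset.range (n + 1),
        Nat.choose (n + k) (3 * k) * Nat.choose (3 * k) k * Nat.choose (2 * k) k) := by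
  have h1 : seqA n = ∑ k ∈ Finset.range (n + 1),
      Nat.choose (n + k) (2 * k) * Nat.choose (n - k) k * Nat.choose (2 * k) k := by
    refine Finset.sum_congr rfl fun k hk => ?_
    have hkn : k ≤ n := Nat.lt_succ_iff.mp (Finset.mem_range.mp hk)
    have h := Nat.choose_mul (n := n + k) (k := 2 * k) (s := k)
      (by omega)
    have h2k : 2 * k - k = k := by omega
    have hnk : n + k - k = n := by omega
    rw [h2k, hnk] at h
    calc n.choose k * (n - k).choose k * (n + k).choose k
        = (n + k).choose k * n.choose k * (n - k).choose k := by ring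
      _ = (n + k).choose (2 * k) * (2 * k).choose k * (n - k).choose k := by rw [← h]
      _ = (n + k).choose (2 * k) * (n - k).choose k * (2 * k).choose k := by ring
  refine ⟨h1, h1.trans ?_⟩
  refine Finset.sum_congr rfl fun k hk => ?_
  have hkn : k ≤ n := Nat.lt_succ_iff.mp (Finset.mem_range.mp hk)
  by_cases h2 : 2 * k ≤ n
  · have h := Nat.choose_mul (n := n + k) (k := 3 * k) (s := 2 * k)
      (by omega)
    have e1 : 3 * k - 2 * k = k := by omega
    have e2 : n + k - 2 * k = n - k := by omega
    rw [e1, e2] at h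
    have hsymm : (3 * k).choose (2 * k) = (3 * k).choose k := by
      rw [show 2 * k = 3 * k - k by omega, Nat.choose_symm (by omega)]
    calc (n + k).choose (2 * k) * (n - k).choose k * (2 * k).choose k
        = (n + k).choose (3 * k) * (3 * k).choose (2 * k) * (2 * k).choose k := by rw [h]
      _ = (n + k).choose (3 * k) * (3 * k).choose k * (2 * k).choose k := by rw [hsymm]
  · have hz1 : (n - k).choose k = 0 := Nat.choose_eq_zero_of_lt (by omega)
    have hz2 : (n + k).choose (3 * k) = 0 := Nat.choose_eq_zero_of_lt (by omega)
    rw [hz1, hz2]; ring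
end

section
/- In the ring of formal power series ℚ[[x]], the identity Σ_{n≥0} a_n x^n = Σ_{k≥0} C(2k,k)·C(3k,k) · x^{2k} · (1−x)^{−(3k+1)} holds; equivalently, for every n ∈ ℕ, a_n = Σ_{k=0}^{⌊n/2⌋} C(2k,k)·C(3k,k)·C(n+k,3k). -/
/-- `(1-x)^{-(3k+1)}` as a formal power series, i.e. `∑_{l≥0} C(3k+l,3k) x^l`. -/
noncomputable def invPow (k : ℕ) : PowerSeries ℚ :=
  PowerSeries.mk fun l => (Nat.choose (3 * k + l) (3 * k) : ℚ)

lemma seqA_eq (n : ℕ) : seqA n = ∑ k ∈ Finset.range (n / 2 + 1),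
    Nat.choose (2 * k) k * Nat.choose (3 * k) k * Nat.choose (n + k) (3 * k) := by
  unfold seqA
  rw [← Finset.sum_subset (Finset.range_subset_range.2 (by omega : n / 2 + 1 ≤ n + 1))]
  · apply Finset.sum_congr rfl
    intro k hk
    have hk2 : 2 * k ≤ n := by
      have := Finset.mem_range.1 hk; omega
    have hA : Nat.choose n (2 * k) * Nat.choose (2 * k) k
        = Nat.choose n k * Nat.choose (n - k) k := by
      have := Nat.choose_mul (n := n) (by omega : k ≤ 2 * k)
      simpa [show 2 * k - k = k by omega] using this
    have hB : Nat.choose (n + k) (3 * k) * Nat.choose (3 * k) k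
        = Nat.choose (n + k) k * Nat.choose n (2 * k) := by
      have := Nat.choose_mul (n := n + k) (by omega : k ≤ 3 * k)
      simpa [show n + k - k = n by omega, show 3 * k - k = 2 * k by omega] using this
    calc Nat.choose n k * Nat.choose (n - k) k * Nat.choose (n + k) k
        = Nat.choose n (2 * k) * Nat.choose (2 * k) k * Nat.choose (n + k) k := by rw [hA]
      _ = Nat.choose (2 * k) k * (Nat.choose (n + k) k * Nat.choose n (2 * k)) := by ring
      _ = Nat.choose (2 * k) k * (Nat.choose (n + k) (3 * k) * Nat.choose (3 * k) k) := by
          rw [hB]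
      _ = Nat.choose (2 * k) k * Nat.choose (3 * k) k * Nat.choose (n + k) (3 * k) := by ring
  · intro k hk hk'
    have h1 := Finset.mem_range.1 hk
    have h2 : n / 2 + 1 ≤ k := by
      by_contra h; exact hk' (Finset.mem_range.2 (by omega))
    have : n - k < k := by omega
    simp [Nat.choose_eq_zero_of_lt this]

/-- The generating-function identity
`∑_{n≥0} a_n x^n = ∑_{k≥0} C(2k,k) C(3k,k) x^{2k} (1-x)^{-(3k+1)}` in `ℚ[[x]]`:
since the `k`-th summand has order at least `2k`, the identity is expressed by saying
that for each `n`, the coefficient of `x^n` on the left equals the (finite) sum over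
`k` of the coefficients of `x^n` of the summands; equivalently,
`a_n = ∑_{k=0}^{⌊n/2⌋} C(2k,k) C(3k,k) C(n+k,3k)`. -/
theorem seqA_generating_function (n : ℕ) :
    (PowerSeries.coeff n (PowerSeries.mk fun m => (seqA m : ℚ))
      = ∑ k ∈ Finset.range (n / 2 + 1),
          PowerSeries.coeff n
            (((Nat.choose (2 * k) k * Nat.choose (3 * k) k : ℚ)) •
              (PowerSeries.X ^ (2 * k) * invPow k))) ∧
    seqA n = ∑ k ∈ Finset.range (n / 2 + 1),
      Nat.choose (2 * k) k * Nat.choose (3 * k) k * Nat.choose (n + k) (3 * k) := by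
  refine ⟨?_, seqA_eq n⟩
  have hc : ∀ k ∈ Finset.range (n / 2 + 1),
      PowerSeries.coeff (R := ℚ) n
        (((Nat.choose (2 * k) k * Nat.choose (3 * k) k : ℚ)) •
          (PowerSeries.X ^ (2 * k) * invPow k))
      = (Nat.choose (2 * k) k * Nat.choose (3 * k) k * Nat.choose (n + k) (3 * k) : ℕ) := by
    intro k hk
    have hk2 : 2 * k ≤ n := by have := Finset.mem_range.1 hk; omega
    rw [PowerSeries.coeff_smul, smul_eq_mul]
    have hn : n = (n - 2 * k) + 2 * k := by omega
    rw [hn, PowerSeries.coeff_X_pow_mul]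
    simp only [invPow, PowerSeries.coeff_mk]
    have : 3 * k + (n - 2 * k) = n + k := by omega
    rw [this]
    simp only [show n - 2 * k + 2 * k + k = n + k by omega]
    push_cast
    ring
  rw [Finset.sum_congr rfl hc, PowerSeries.coeff_mk, seqA_eq n]
  push_cast
  ring
end

section
/- Let b, c be integers and n ∈ ℕ, and let T_n(b,c) denote the coefficient of x^n in the expansion of (x^2 + b x + c)^n. Then T_n(b,c) = Σ_{k=0}^{⌊n/2⌋} C(n,2k)·C(2k,k)·b^{n−2k}·c^k. -/
open Polynomial Finset in
theorem generalized_central_trinomial_formula (b c : ℤ) (n : ℕ) :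
    ((X ^ 2 + C b * X + C c : Polynomial ℤ) ^ n).coeff n
      = ∑ k ∈ Finset.range (n / 2 + 1),
          (Nat.choose n (2 * k) * Nat.choose (2 * k) k : ℤ) * b ^ (n - 2 * k) * c ^ k := by
  have h1 : (X ^ 2 + C b * X + C c : Polynomial ℤ) ^ n
      = ∑ k ∈ range (n + 1),
          (X ^ 2 + C b * X) ^ k * (C c) ^ (n - k) * (n.choose k : Polynomial ℤ) :=
    add_pow _ _ _
  have h2 : ∀ k ∈ range (n + 1),
      ((X ^ 2 + C b * X) ^ k * (C c) ^ (n - k) * (n.choose k : Polynomial ℤ)).coeff n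
        = (n.choose k * k.choose (n - k) : ℤ) * b ^ (k - (n - k)) * c ^ (n - k) := by
    intro k hk
    simp only [mem_range, Nat.lt_succ_iff] at hk
    have hx : (X ^ 2 + C b * X : Polynomial ℤ) = X * (X + C b) := by ring
    rw [hx, mul_pow, ← C_pow, ← map_natCast (C : ℤ →+* Polynomial ℤ)]
    rw [mul_assoc, mul_comm, ← mul_assoc, ← C_mul, mul_assoc, coeff_C_mul]
    have key : ((X:Polynomial ℤ)^k * (X + C b)^k).coeff n = ((X + C b)^k).coeff (n-k) := by
      have h := coeff_X_pow_mul ((X + C b : Polynomial ℤ)^k) k (n-k)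
      rwa [Nat.sub_add_cancel hk] at h
    rw [key]
    rw [coeff_X_add_C_pow]
    ring
  rw [h1, finset_sum_coeff, Finset.sum_congr rfl h2]
  have h3 := Finset.sum_range_reflect
    (fun k => (↑(n.choose k) * ↑(k.choose (n - k)) : ℤ) * b ^ (k - (n - k)) * c ^ (n - k)) (n+1)
  simp only [Nat.add_sub_cancel] at h3
  rw [← h3]
  have h4 : ∀ j ∈ range (n+1), j ∉ range (n/2+1) →
      ((n.choose (n-j) : ℕ) : ℤ) * (((n-j).choose (n-(n-j)) : ℕ) : ℤ)
        * b ^ ((n-j) - (n-(n-j))) * c ^ (n-(n-j)) = 0 := by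
    intro j hj hj2
    simp only [mem_range, Nat.lt_succ_iff, not_le] at hj hj2
    have : n - j < j := by omega
    rw [Nat.choose_eq_zero_of_lt (by omega : n - j < n - (n - j))]
    push_cast; ring
  rw [← Finset.sum_subset (by intro x hx; simp_all [mem_range]; omega) h4]
  apply Finset.sum_congr rfl
  intro j hj
  simp only [mem_range, Nat.lt_succ_iff] at hj
  have h2j : 2 * j ≤ n := by omega
  have e1 : n - (n - j) = j := by omega
  have e2 : (n - j) - j = n - 2*j := by omega
  rw [e1, e2]
  rw [← Nat.cast_mul, ← Nat.cast_mul]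
  congr 1
  rw [Nat.choose_mul (n := n) (by omega : j ≤ 2 * j), Nat.choose_symm (by omega : j ≤ n),
      show 2*j - j = j by omega]
end

section
/- Let p > 3 be a prime and let a be a positive integer. Then T_{p^{a−1}−1} ≡ (p/3)^{a−1} (mod p). -/
open Finset Nat

namespace TrinAux

variable {p : ℕ} [hp : Fact p.Prime]

lemma fac_ne_zero {n : ℕ} (hn : n < p) : ((n ! : ZMod p)) ≠ 0 := by
  rw [Ne, ZMod.natCast_eq_zero_iff]
  intro h
  exact absurd (Nat.Prime.dvd_factorial hp.out |>.mp h) (by omega)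

/-- Key factorial identity: `(2k)! * (h-k)! = (-4)^k * k! * h!` in `ZMod p` for `h = p/2`. -/
lemma fac_key (hodd : p % 2 = 1) {k : ℕ} (hk : k ≤ p / 2) :
    ((2 * k)! : ZMod p) * ((p / 2 - k)! : ZMod p) =
      (-4) ^ k * (k ! : ZMod p) * ((p / 2)! : ZMod p) := by
  induction k with
  | zero => simp
  | succ k ih =>
    have hk' : k ≤ p / 2 := by omega
    have ih := ih hk'
    set h := p / 2 with hh
    have hcast : ((h - k : ℕ) : ZMod p) = (h : ZMod p) - (k : ZMod p) := by
      exact_mod_cast Nat.cast_sub hk'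
    have hfac1 : ((2 * (k + 1))! : ZMod p) =
        (2 * k + 2 : ℕ) * (2 * k + 1 : ℕ) * ((2 * k)! : ZMod p) := by
      have : 2 * (k + 1) = (2 * k + 1) + 1 := by ring
      rw [this, Nat.factorial_succ, Nat.factorial_succ]
      push_cast; ring
    have hfac2 : ((h - k)! : ZMod p) = ((h - k : ℕ) : ZMod p) * ((h - (k + 1))! : ZMod p) := by
      have e : h - k = (h - (k + 1)) + 1 := by omega
      rw [e, Nat.factorial_succ, Nat.cast_mul, ← e]
    -- the key congruence `2k+1 ≡ -2(h-k) [ZMod p]`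
    have hcong : ((2 * k + 1 : ℕ) : ZMod p) = -2 * ((h - k : ℕ) : ZMod p) := by
      have hp2 : p = 2 * h + 1 := by omega
      have hz : ((2 * h + 1 : ℕ) : ZMod p) = 0 := by
        rw [← hp2]; exact ZMod.natCast_self p
      have hx : ((2 * k + 1 : ℕ) : ZMod p) + 2 * ((h : ZMod p) - (k : ZMod p)) = 0 := by
        calc ((2 * k + 1 : ℕ) : ZMod p) + 2 * ((h : ZMod p) - (k : ZMod p))
            = ((2 * h + 1 : ℕ) : ZMod p) := by push_cast; ring
          _ = 0 := hz
      rw [hcast]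
      linear_combination hx
    have hne : ((h - k : ℕ) : ZMod p) ≠ 0 := by
      rw [Ne, ZMod.natCast_eq_zero_iff]
      intro hdvd
      have h1 : 0 < h - k := by omega
      have h2 : h - k < p := by omega
      have := Nat.le_of_dvd h1 hdvd
      omega
    apply mul_right_cancel₀ hne
    calc ((2 * (k + 1))! : ZMod p) * ((h - (k + 1))! : ZMod p) * ((h - k : ℕ) : ZMod p)
        = (2 * k + 2 : ℕ) * ((2 * k + 1 : ℕ) : ZMod p) * (((2 * k)! : ZMod p) *
            (((h - k : ℕ) : ZMod p) * ((h - (k + 1))! : ZMod p))) := by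
          rw [hfac1]; ring
      _ = (2 * k + 2 : ℕ) * (-2 * ((h - k : ℕ) : ZMod p)) * (((2 * k)! : ZMod p) * ((h - k)! : ZMod p)) := by
          rw [hcong, hfac2]
      _ = (2 * k + 2 : ℕ) * (-2 * ((h - k : ℕ) : ZMod p)) * ((-4) ^ k * (k ! : ZMod p) * ((h)! : ZMod p)) := by
          rw [ih]
      _ = (-4) ^ (k + 1) * (((k + 1) : ℕ) * (k ! : ZMod p)) * ((h)! : ZMod p) * ((h - k : ℕ) : ZMod p) := by
          push_cast; ring
      _ = (-4) ^ (k + 1) * ((k + 1)! : ZMod p) * ((h)! : ZMod p) * ((h - k : ℕ) : ZMod p) := by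
          rw [Nat.factorial_succ]; push_cast; ring

/-- `C(2k,k) = (-4)^k C(p/2, k)` in `ZMod p`. -/
lemma central_binom_eq (hodd : p % 2 = 1) {k : ℕ} (hk : k ≤ p / 2) :
    ((Nat.choose (2 * k) k : ℕ) : ZMod p) = (-4) ^ k * ((Nat.choose (p / 2) k : ℕ) : ZMod p) := by
  set h := p / 2 with hh
  have hhp : h < p := Nat.div_lt_self (by omega) (by omega)
  have e1 : (Nat.choose (2 * k) k) * (k ! * k !) = (2 * k)! := by
    have := Nat.choose_mul_factorial_mul_factorial (show k ≤ 2 * k by omega)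
    have h2 : 2 * k - k = k := by omega
    rw [h2] at this
    rw [← this]; ring
  have e2 : (Nat.choose h k) * k ! * (h - k)! = h ! :=
    Nat.choose_mul_factorial_mul_factorial hk
  have hk1 : (k ! : ZMod p) ≠ 0 := fac_ne_zero (by omega)
  have hk2 : ((h - k)! : ZMod p) ≠ 0 := fac_ne_zero (by omega)
  apply mul_right_cancel₀ (mul_ne_zero (mul_ne_zero hk1 hk1) hk2)
  calc ((Nat.choose (2 * k) k : ℕ) : ZMod p) * ((k ! : ZMod p) * (k ! : ZMod p) * ((h - k)! : ZMod p))
      = (((Nat.choose (2 * k) k) * (k ! * k !) : ℕ) : ZMod p) * ((h - k)! : ZMod p) := by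
        push_cast; ring
    _ = ((2 * k)! : ZMod p) * ((h - k)! : ZMod p) := by rw [e1]
    _ = (-4) ^ k * (k ! : ZMod p) * (h ! : ZMod p) := fac_key hodd hk
    _ = (-4) ^ k * (k ! : ZMod p) * (((Nat.choose h k) * k ! * (h - k)! : ℕ) : ZMod p) := by rw [e2]
    _ = (-4) ^ k * ((Nat.choose h k : ℕ) : ZMod p) *
          ((k ! : ZMod p) * (k ! : ZMod p) * ((h - k)! : ZMod p)) := by push_cast; ring

/-- Base case: the sum of central binomial coefficients is `(-3)^(p/2)`. -/
lemma sum_central_binom (hodd : p % 2 = 1) :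
    ∑ k ∈ range (p / 2 + 1), ((Nat.choose (2 * k) k : ℕ) : ZMod p) = (-3 : ZMod p) ^ (p / 2) := by
  have : ∀ k ∈ range (p / 2 + 1), ((Nat.choose (2 * k) k : ℕ) : ZMod p) =
      (-4 : ZMod p) ^ k * 1 ^ (p / 2 - k) * ((Nat.choose (p / 2) k : ℕ) : ZMod p) := by
    intro k hk
    rw [mem_range] at hk
    rw [central_binom_eq hodd (by omega), one_pow, mul_one]
  rw [Finset.sum_congr rfl this, ← add_pow]
  norm_num

/-- `C(p^m - 1, j) = (-1)^j` in `ZMod p` for `j ≤ p^m - 1`. -/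
lemma choose_pow_sub_one {m j : ℕ} (hj : j ≤ p ^ m - 1) :
    ((Nat.choose (p ^ m - 1) j : ℕ) : ZMod p) = (-1) ^ j := by
  induction j with
  | zero => simp
  | succ j ih =>
    have hm : 1 ≤ p ^ m := Nat.one_le_pow _ _ hp.out.pos
    have hdvd : p ∣ Nat.choose (p ^ m) (j + 1) :=
      Nat.Prime.dvd_choose_pow hp.out (by omega) (by omega)
    have hrec := Nat.choose_succ_succ' (p ^ m - 1) j
    have h1 : p ^ m - 1 + 1 = p ^ m := by omega
    rw [h1] at hrec
    have hz : ((Nat.choose (p ^ m) (j + 1) : ℕ) : ZMod p) = 0 :=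
      (ZMod.natCast_eq_zero_iff _ _).mpr hdvd
    have hc := congrArg (fun n : ℕ => (n : ZMod p)) hrec
    simp only [Nat.cast_add] at hc
    rw [hz, ih (by omega)] at hc
    have hfin : ((Nat.choose (p ^ m - 1) (j + 1) : ℕ) : ZMod p) = -(-1) ^ j := by
      linear_combination -hc
    rw [hfin]; ring

/-- abbreviation: central binomial coefficient in `ZMod p`. -/
noncomputable def c (p k : ℕ) : ZMod p := ((Nat.choose (2 * k) k : ℕ) : ZMod p)

lemma lucas_c_mul (hodd : p % 2 = 1) {q r : ℕ} (hr : r ≤ p / 2) :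
    c p (q * p + r) = c p q * c p r := by
  have hp2 := hp.out.two_le
  have hrp : r < p := by omega
  have h2r : 2 * r < p := by omega
  have key := @Choose.choose_modEq_choose_mod_mul_choose_div_nat (2 * (q * p + r)) (q * p + r) p _
  have e1 : 2 * (q * p + r) = (2 * q) * p + 2 * r := by ring
  have e1' : 2 * (q * p + r) = p * (2 * q) + 2 * r := by ring
  have e2' : q * p + r = p * q + r := by ring
  have hmod1 : (2 * (q * p + r)) % p = 2 * r := by
    rw [e1', Nat.mul_add_mod]; exact Nat.mod_eq_of_lt h2r
  have hdiv1 : (2 * (q * p + r)) / p = 2 * q := by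
    rw [e1', Nat.mul_add_div (by omega)]
    simp [Nat.div_eq_of_lt h2r]
  have hmod2 : (q * p + r) % p = r := by rw [e2', Nat.mul_add_mod]; exact Nat.mod_eq_of_lt hrp
  have hdiv2 : (q * p + r) / p = q := by
    rw [e2', Nat.mul_add_div (by omega)]
    simp [Nat.div_eq_of_lt hrp]
  rw [hmod1, hdiv1, hmod2, hdiv2] at key
  have := (ZMod.natCast_eq_natCast_iff _ _ _).mpr key
  rw [c, c, c, this]
  push_cast
  ring

lemma lucas_c_zero {q r : ℕ} (hr1 : p / 2 < r) (hr2 : r < p) :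
    c p (q * p + r) = 0 := by
  have hp2 := hp.out.two_le
  have h2r : p ≤ 2 * r ∧ 2 * r - p < p := by omega
  have key := @Choose.choose_modEq_choose_mod_mul_choose_div_nat (2 * (q * p + r)) (q * p + r) p _
  have e1 : 2 * (q * p + r) = (2 * q + 1) * p + (2 * r - p) := by
    have h3 : (2 * q + 1) * p = 2 * (q * p) + p := by ring
    omega
  have e1' : 2 * (q * p + r) = p * (2 * q + 1) + (2 * r - p) := by
    have h3 : p * (2 * q + 1) = 2 * (q * p) + p := by ring
    omega
  have e2' : q * p + r = p * q + r := by ring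
  have hmod1 : (2 * (q * p + r)) % p = 2 * r - p := by
    rw [e1', Nat.mul_add_mod]; exact Nat.mod_eq_of_lt h2r.2
  have hdiv1 : (2 * (q * p + r)) / p = 2 * q + 1 := by
    rw [e1', Nat.mul_add_div (by omega)]
    simp [Nat.div_eq_of_lt h2r.2]
  have hmod2 : (q * p + r) % p = r := by rw [e2', Nat.mul_add_mod]; exact Nat.mod_eq_of_lt hr2
  have hdiv2 : (q * p + r) / p = q := by
    rw [e2', Nat.mul_add_div (by omega)]
    simp [Nat.div_eq_of_lt hr2]
  rw [hmod1, hdiv1, hmod2, hdiv2] at key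
  have hz : Nat.choose (2 * r - p) r = 0 := Nat.choose_eq_zero_of_lt (by omega)
  rw [hz, zero_mul] at key
  have := (ZMod.natCast_eq_natCast_iff _ _ _).mpr key
  rw [c, this]
  simp

/-- The partial sum of central binomial coefficients. -/
noncomputable def S (p m : ℕ) : ZMod p :=
  ∑ k ∈ range ((p ^ m - 1) / 2 + 1), c p k

lemma sum_range_mul_split {M : Type*} [AddCommMonoid M] (f : ℕ → M) (n q : ℕ) :
    ∑ k ∈ range (n * q), f k = ∑ i ∈ range n, ∑ r ∈ range q, f (i * q + r) := by
  induction n with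
  | zero => simp
  | succ n ih =>
    have h : (n + 1) * q = n * q + q := by ring
    rw [h, Finset.sum_range_add, ih, Finset.sum_range_succ]

lemma pow_odd (hodd : p % 2 = 1) (m : ℕ) : p ^ m % 2 = 1 := by
  induction m with
  | zero => rfl
  | succ m ih =>
    rw [pow_succ, Nat.mul_mod, ih, hodd]

lemma h_succ (hodd : p % 2 = 1) (m : ℕ) :
    (p ^ (m + 1) - 1) / 2 = ((p ^ m - 1) / 2) * p + p / 2 := by
  obtain ⟨v, hv⟩ : ∃ v, p = 2 * v + 1 := ⟨p / 2, by omega⟩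
  obtain ⟨u, hu⟩ : ∃ u, p ^ m = 2 * u + 1 := ⟨p ^ m / 2, by have := pow_odd hodd m; omega⟩
  have hmul : p ^ (m + 1) = 2 * (2 * (u * v) + u + v) + 1 := by
    rw [pow_succ, hu, hv]; ring
  have hr : u * p = 2 * (u * v) + u := by rw [hv]; ring
  have h2 : (p ^ m - 1) / 2 = u := by omega
  rw [h2]
  omega

lemma S_one (hodd : p % 2 = 1) : S p 1 = (-3 : ZMod p) ^ (p / 2) := by
  have h1 : (p ^ 1 - 1) / 2 = p / 2 := by rw [pow_one]; omega
  rw [S, h1]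
  exact sum_central_binom hodd

lemma S_succ (hodd : p % 2 = 1) (m : ℕ) : S p (m + 1) = S p m * S p 1 := by
  have hp2 := hp.out.two_le
  set n := (p ^ m - 1) / 2 with hn
  have h0 : S p (m + 1) = ∑ k ∈ range ((n + 1) * p), c p k := by
    rw [S, h_succ hodd m, ← hn]
    apply Finset.sum_subset
    · apply Finset.range_subset_range.mpr
      have h1 : (n + 1) * p = n * p + p := by ring
      omega
    · intro k hk hnk
      rw [mem_range] at hk hnk
      push_neg at hnk
      have h1 : (n + 1) * p = n * p + p := by ring
      have hkeq : k = n * p + (k - n * p) := by omega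
      rw [hkeq]
      exact lucas_c_zero (by omega) (by omega)
  rw [h0, sum_range_mul_split]
  have hS1 : S p 1 = ∑ r ∈ range (p / 2 + 1), c p r := by
    rw [S, pow_one]
    congr 2
    omega
  have hinner : ∀ i ∈ range (n + 1), ∑ r ∈ range p, c p (i * p + r) = c p i * S p 1 := by
    intro i _
    have hsub : ∑ r ∈ range p, c p (i * p + r) = ∑ r ∈ range (p / 2 + 1), c p (i * p + r) := by
      symm
      apply Finset.sum_subset (Finset.range_subset_range.mpr (by omega))
      intro r hr hnr
      rw [mem_range] at hr hnr
      push_neg at hnr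
      exact lucas_c_zero (by omega) (by omega)
    have hmul : ∀ r ∈ range (p / 2 + 1), c p (i * p + r) = c p i * c p r := by
      intro r hr
      rw [mem_range] at hr
      exact lucas_c_mul hodd (by omega)
    rw [hsub, Finset.sum_congr rfl hmul, ← Finset.mul_sum, hS1]
  rw [Finset.sum_congr rfl hinner, ← Finset.sum_mul]
  have hSm : S p m = ∑ i ∈ range (n + 1), c p i := by rw [S, ← hn]
  rw [hSm]

lemma S_eq (hodd : p % 2 = 1) (m : ℕ) : S p m = ((-3 : ZMod p) ^ (p / 2)) ^ m := by
  induction m with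
  | zero => simp [S, c]
  | succ m ih => rw [S_succ hodd, ih, S_one hodd, pow_succ]

lemma legendre_swap (hp3 : 3 < p) : legendreSym 3 p = legendreSym p (-3) := by
  haveI : Fact (Nat.Prime 3) := ⟨by norm_num⟩
  have hodd : p % 2 = 1 := Nat.odd_iff.mp (hp.out.odd_of_ne_two (by omega))
  have hp2 : p ≠ 2 := by omega
  have hqr := legendreSym.quadratic_reciprocity' (p := p) (q := 3) hp2 (by norm_num)
  have h32 : (3 : ℕ) / 2 = 1 := by norm_num
  rw [h32, mul_one] at hqr
  have hneg : legendreSym p (-3) = legendreSym p (-1) * legendreSym p 3 := by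
    rw [show ((-3 : ℤ)) = -1 * 3 by ring, legendreSym.mul]
  have hneg1 : legendreSym p (-1) = (-1) ^ (p / 2) := by
    rw [legendreSym.at_neg_one hp2, ZMod.χ₄_eq_neg_one_pow hodd]
  rw [hqr, hneg, hneg1]
  norm_num

end TrinAux

theorem trinomial_prime_power_sub_one (p : ℕ) [hp : Fact p.Prime] (hp3 : 3 < p)
    (a : ℕ) (ha : 0 < a) :
    (centralTrinomial (p ^ (a - 1) - 1) : ℤ) ≡ (legendreSym 3 p) ^ (a - 1) [ZMOD p] := by
  have hodd : p % 2 = 1 := Nat.odd_iff.mp (hp.out.odd_of_ne_two (by omega))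
  set m := a - 1 with hm
  rw [← ZMod.intCast_eq_intCast_iff]
  push_cast
  -- reduce the trinomial coefficient to the sum of central binomial coefficients
  have hpm1 : 1 ≤ p ^ m := Nat.one_le_pow _ _ hp.out.pos
  have hsum : ((centralTrinomial (p ^ m - 1) : ℕ) : ZMod p) = TrinAux.S p m := by
    rw [centralTrinomial, TrinAux.S, Nat.cast_sum]
    apply Finset.sum_congr rfl
    intro k hk
    rw [Finset.mem_range] at hk
    have h2k : 2 * k ≤ p ^ m - 1 := by
      have := Nat.div_mul_le_self (p ^ m - 1) 2
      omega
    rw [Nat.cast_mul, TrinAux.choose_pow_sub_one h2k, pow_mul]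
    simp [TrinAux.c]
  rw [hsum, TrinAux.S_eq hodd]
  have hleg : ((legendreSym 3 p : ℤ) : ZMod p) = (-3 : ZMod p) ^ (p / 2) := by
    rw [TrinAux.legendre_swap hp3, legendreSym.eq_pow]
    norm_num
  rw [← hleg]
end

section
/- Let p be a prime, n a positive integer, and k an integer with 0 < k ≤ pn and p ∤ k. Then, in ℤ_p, C(pn,k) ≡ (pn/k) · (−1)^{δ_k} · C(n−1, ⌊(k−1)/p⌋) (mod p^{2+2ν_p(n)}), where δ_k = #{j : 0 < j < k, p ∤ j} and ν_p(n) is the p-adic valuation of n; i.e., the p-adic valuation of the rational number C(pn,k) − (pn/k)(−1)^{δ_k} C(n−1, ⌊(k−1)/p⌋) is at least 2 + 2ν_p(n). -/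
open Finset

private lemma choose_eq_prod_Icc {K : Type*} [Field K] [CharZero K] (a : ℕ) :
    ∀ m : ℕ, m ≤ a → (a.choose m : K) = ∏ j ∈ Icc 1 m, (((a : K) + 1 - j) / j) := by
  intro m
  induction m with
  | zero => simp
  | succ m ih =>
    intro h
    have hm : m ≤ a := Nat.le_of_succ_le h
    have hmem : m + 1 ∉ Icc 1 m := by simp
    rw [← Finset.insert_Icc_right_eq_Icc_add_one (by omega : 1 ≤ m + 1), Finset.prod_insert hmem,
      ← ih hm]
    have hcast : (a.choose (m+1) : K) * (m+1) = (a.choose m : K) * ((a : K) - m) := by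
      have := Nat.choose_succ_right_eq a m
      have h2 : ((a - m : ℕ) : K) = (a : K) - m := by
        rw [Nat.cast_sub hm]
      calc (a.choose (m+1) : K) * (m+1) = ((a.choose (m+1) * (m+1) : ℕ) : K) := by push_cast; ring
        _ = ((a.choose m * (a - m) : ℕ) : K) := by rw [this]
        _ = (a.choose m : K) * ((a : K) - m) := by push_cast [hm]; ring
    have hne : ((m : K) + 1) ≠ 0 := by
      have : ((m+1 : ℕ) : K) ≠ 0 := Nat.cast_ne_zero.mpr (by omega)
      push_cast at this; exact this
    field_simp at hcast ⊢
    push_cast at hcast ⊢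
    linear_combination hcast

private lemma norm_prod_one_add_sub_one {ι : Type*} {p : ℕ} [Fact p.Prime]
    (s : Finset ι) (f : ι → ℚ_[p]) (ε : ℝ) (hε0 : 0 ≤ ε) (hε1 : ε ≤ 1)
    (hf : ∀ i ∈ s, ‖f i‖ ≤ ε) :
    ‖(∏ i ∈ s, (1 + f i)) - 1‖ ≤ ε := by
  classical
  induction s using Finset.induction with
  | empty => simpa using hε0
  | @insert a s ha ih =>
    have hfa : ‖f a‖ ≤ ε := hf a (Finset.mem_insert_self a s)
    have ihs : ‖(∏ i ∈ s, (1 + f i)) - 1‖ ≤ ε :=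
      ih fun i hi => hf i (Finset.mem_insert_of_mem hi)
    rw [Finset.prod_insert ha]
    have key : (1 + f a) * (∏ i ∈ s, (1 + f i)) - 1
        = (1 + f a) * ((∏ i ∈ s, (1 + f i)) - 1) + f a := by ring
    rw [key]
    refine le_trans (Padic.nonarchimedean _ _) (max_le ?_ hfa)
    have h1 : ‖(1 : ℚ_[p]) + f a‖ ≤ 1 := by
      refine le_trans (Padic.nonarchimedean _ _) (max_le (by simp) (le_trans hfa hε1))
    calc ‖(1 + f a) * ((∏ i ∈ s, (1 + f i)) - 1)‖
        = ‖(1 + f a)‖ * ‖(∏ i ∈ s, (1 + f i)) - 1‖ := norm_mul _ _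
      _ ≤ 1 * ε := mul_le_mul h1 ihs (norm_nonneg _) zero_le_one
      _ = ε := one_mul ε

theorem binom_pn_k_congruence (p : ℕ) [hp : Fact p.Prime] (n : ℕ) (hn : 0 < n)
    (k : ℕ) (hk0 : 0 < k) (hk : k ≤ p * n) (hpk : ¬ p ∣ k) :
    ‖(((Nat.choose (p * n) k : ℚ)
        - (p * n : ℚ) / (k : ℚ) * (-1) ^ (((Finset.Ioo 0 k).filter fun j => ¬ p ∣ j).card)
            * (Nat.choose (n - 1) ((k - 1) / p) : ℚ) : ℚ) : ℚ_[p])‖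
      ≤ (p : ℝ) ^ (-(2 + 2 * (padicValNat p n : ℤ))) := by
  classical
  have hp2 : 2 ≤ p := hp.out.two_le
  have hppos : 0 < p := by omega
  have hn1 : 1 ≤ n := hn
  set v := padicValNat p n with hv
  set M := (k - 1) / p with hM
  set S := (Finset.Ioo 0 k).filter (fun j => ¬ p ∣ j) with hS
  set T := (Finset.Ioo 0 k).filter (fun j => p ∣ j) with hT
  set δ := S.card with hδ
  -- k < p * n
  have hkne : k ≠ p * n := fun h => hpk (h ▸ Dvd.intro n rfl)
  have hklt : k < p * n := lt_of_le_of_ne hk hkne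
  -- M ≤ n - 1
  have hMn : M ≤ n - 1 := by
    have : (k - 1) / p < n := Nat.div_lt_of_lt_mul (by omega)
    omega
  -- basic nonzeroness
  have hknz : (k : ℚ_[p]) ≠ 0 := Nat.cast_ne_zero.mpr (by omega)
  -- norms
  have hnormk : ‖(k : ℚ_[p])‖ = 1 := by
    apply le_antisymm
    · exact_mod_cast Padic.norm_int_le_one (k : ℤ)
    · by_contra h
      push_neg at h
      have : ‖((k : ℤ) : ℚ_[p])‖ < 1 := by push_cast; exact h
      rw [Padic.norm_intCast_lt_one_iff] at this
      exact hpk (by exact_mod_cast this)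
  have hnormpn : ‖((p * n : ℕ) : ℚ_[p])‖ ≤ (p : ℝ) ^ (-(1 + v : ℤ)) := by
    have hd : ((p : ℤ) ^ (1 + v)) ∣ ((p * n : ℕ) : ℤ) := by
      have : (p : ℕ) ^ (1 + v) ∣ p * n := by
        rw [pow_add, pow_one]
        exact mul_dvd_mul_left p (pow_padicValNat_dvd)
      exact_mod_cast this
    have := (Padic.norm_int_le_pow_iff_dvd ((p * n : ℕ) : ℤ) (1 + v)).mpr hd
    push_cast at this ⊢
    exact_mod_cast this
  set ε : ℝ := (p : ℝ) ^ (-(1 + v : ℤ)) with hε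
  have hε0 : 0 ≤ ε := by positivity
  have hε1 : ε ≤ 1 := by
    apply zpow_le_one_of_nonpos₀
    · exact_mod_cast by omega
    · omega
  -- the product decomposition in ℚ_[p]
  -- key identity: choose (p*n) k * k = (p*n) * choose (p*n - 1) (k - 1)
  have hnat1 : (p * n).choose k * k = (p * n) * (p * n - 1).choose (k - 1) := by
    have := Nat.add_one_mul_choose_eq (p * n - 1) (k - 1)
    have h1 : p * n - 1 + 1 = p * n := by omega
    have h2 : k - 1 + 1 = k := by omega
    rw [h1, h2] at this
    omega
  -- choose (p*n - 1) (k-1) as product over Ioo 0 k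
  have hIcc : Finset.Icc 1 (k - 1) = Finset.Ioo 0 k := by
    ext j; simp only [Finset.mem_Icc, Finset.mem_Ioo]; omega
  have hchoose1 : ((p * n - 1).choose (k - 1) : ℚ_[p])
      = ∏ j ∈ Finset.Ioo 0 k, (((p * n : ℕ) : ℚ_[p]) - j) / j := by
    rw [← hIcc, choose_eq_prod_Icc (p * n - 1) (k - 1) (by omega)]
    apply Finset.prod_congr rfl
    intro j hj
    congr 1
    have : ((p * n - 1 : ℕ) : ℚ_[p]) = ((p * n : ℕ) : ℚ_[p]) - 1 := by
      push_cast [Nat.cast_sub (by omega : 1 ≤ p * n)]; ring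
    rw [this]; ring
  -- split the product
  have hsplit : ∏ j ∈ Finset.Ioo 0 k, (((p * n : ℕ) : ℚ_[p]) - j) / j
      = (∏ j ∈ T, (((p * n : ℕ) : ℚ_[p]) - j) / j) * ∏ j ∈ S, (((p * n : ℕ) : ℚ_[p]) - j) / j := by
    rw [hT, hS, Finset.prod_filter_mul_prod_filter_not]
  -- T as an image
  have hTimage : T = Finset.image (fun m => p * m) (Finset.Icc 1 M) := by
    ext j
    simp only [hT, Finset.mem_filter, Finset.mem_Ioo, Finset.mem_image, Finset.mem_Icc]
    constructor
    · rintro ⟨⟨hj0, hjk⟩, m, rfl⟩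
      have hm1 : 1 ≤ m := by
        rcases Nat.eq_zero_or_pos m with h | h
        · subst h; simp at hj0
        · exact h
      refine ⟨m, ⟨hm1, ?_⟩, rfl⟩
      rw [hM]
      refine (Nat.le_div_iff_mul_le hppos).mpr ?_
      rw [Nat.mul_comm]
      omega
    · rintro ⟨m, ⟨hm1, hm2⟩, rfl⟩
      have hle : p * m ≤ k - 1 := by
        calc p * m ≤ p * M := Nat.mul_le_mul_left p hm2
          _ = M * p := Nat.mul_comm p M
          _ ≤ k - 1 := hM ▸ Nat.div_mul_le_self (k - 1) p
      exact ⟨⟨Nat.mul_pos hppos (by omega), by omega⟩, m, rfl⟩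
  have hpnz : (p : ℚ_[p]) ≠ 0 := Nat.cast_ne_zero.mpr (by omega)
  have hprodT : ∏ j ∈ T, (((p * n : ℕ) : ℚ_[p]) - j) / j = ((n - 1).choose M : ℚ_[p]) := by
    rw [hTimage, Finset.prod_image (by
      intro a _ b _ h
      exact Nat.eq_of_mul_eq_mul_left hppos h)]
    rw [choose_eq_prod_Icc (n - 1) M hMn]
    apply Finset.prod_congr rfl
    intro m hm
    simp only [Finset.mem_Icc] at hm
    have h1 : ((n - 1 : ℕ) : ℚ_[p]) + 1 = (n : ℚ_[p]) := by
      push_cast [Nat.cast_sub hn1]; ring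
    rw [h1]
    have hm0 : (m : ℚ_[p]) ≠ 0 := Nat.cast_ne_zero.mpr (by omega)
    push_cast
    rw [div_eq_div_iff (mul_ne_zero hpnz hm0) hm0]
    ring
  -- S part
  have hprodS : ∏ j ∈ S, (((p * n : ℕ) : ℚ_[p]) - j) / j
      = (-1) ^ δ * ∏ j ∈ S, (1 + (-(((p * n : ℕ) : ℚ_[p]) / j))) := by
    rw [← Finset.prod_const, ← Finset.prod_mul_distrib]
    apply Finset.prod_congr rfl
    intro j hj
    simp only [hS, Finset.mem_filter, Finset.mem_Ioo] at hj
    have hj0 : (j : ℚ_[p]) ≠ 0 := Nat.cast_ne_zero.mpr (by omega)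
    field_simp
    ring
  -- norm of the tail
  have hftail : ‖(∏ j ∈ S, (1 + (-(((p * n : ℕ) : ℚ_[p]) / j)))) - 1‖ ≤ ε := by
    apply norm_prod_one_add_sub_one S _ ε hε0 hε1
    intro j hj
    simp only [hS, Finset.mem_filter, Finset.mem_Ioo] at hj
    have hnormj : ‖(j : ℚ_[p])‖ = 1 := by
      apply le_antisymm
      · exact_mod_cast Padic.norm_int_le_one (j : ℤ)
      · by_contra h
        push_neg at h
        have : ‖((j : ℤ) : ℚ_[p])‖ < 1 := by push_cast; exact h
        rw [Padic.norm_intCast_lt_one_iff] at this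
        exact hj.2 (by exact_mod_cast this)
    rw [norm_neg, norm_div, hnormj, div_one]
    exact hnormpn
  -- rewrite the main expression
  have hckey : ((p * n).choose k : ℚ_[p])
      = ((p * n : ℕ) : ℚ_[p]) / k * ((n - 1).choose M : ℚ_[p]) * ((-1) ^ δ
        * ∏ j ∈ S, (1 + (-(((p * n : ℕ) : ℚ_[p]) / j)))) := by
    have hc1 : ((p * n).choose k : ℚ_[p]) * k = ((p * n : ℕ) : ℚ_[p]) * ((p * n - 1).choose (k - 1) : ℚ_[p]) := by
      exact_mod_cast congrArg (Nat.cast : ℕ → ℚ_[p]) hnat1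
    rw [hchoose1, hsplit, hprodT, hprodS] at hc1
    field_simp at hc1 ⊢
    linear_combination hc1
  -- the difference
  have hdiff : ((p * n).choose k : ℚ_[p])
      - ((p * n : ℕ) : ℚ_[p]) / k * (-1) ^ δ * ((n - 1).choose M : ℚ_[p])
      = ((p * n : ℕ) : ℚ_[p]) / k * ((n - 1).choose M : ℚ_[p]) * (-1) ^ δ
        * ((∏ j ∈ S, (1 + (-(((p * n : ℕ) : ℚ_[p]) / j)))) - 1) := by
    rw [hckey]; ring
  -- translate the goal
  have hgoal : (((Nat.choose (p * n) k : ℚ)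
        - (p * n : ℚ) / (k : ℚ) * (-1) ^ δ * (Nat.choose (n - 1) M : ℚ) : ℚ) : ℚ_[p])
      = ((p * n).choose k : ℚ_[p])
      - ((p * n : ℕ) : ℚ_[p]) / k * (-1) ^ δ * ((n - 1).choose M : ℚ_[p]) := by
    push_cast
    ring
  rw [hgoal, hdiff]
  -- norm computation
  have hnormchoose : ‖(((n - 1).choose M : ℕ) : ℚ_[p])‖ ≤ 1 := by
    exact_mod_cast Padic.norm_int_le_one (((n - 1).choose M : ℕ) : ℤ)
  have hnormneg : ‖((-1 : ℚ_[p])) ^ δ‖ = 1 := by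
    rw [norm_pow, norm_neg, norm_one, one_pow]
  have hfinal : ‖((p * n : ℕ) : ℚ_[p]) / k * ((n - 1).choose M : ℚ_[p]) * (-1) ^ δ
        * ((∏ j ∈ S, (1 + (-(((p * n : ℕ) : ℚ_[p]) / j)))) - 1)‖ ≤ ε * ε := by
    rw [norm_mul, norm_mul, norm_mul, norm_div, hnormk, div_one, hnormneg, mul_one]
    have h1 : ‖((p * n : ℕ) : ℚ_[p])‖ * ‖(((n - 1).choose M : ℕ) : ℚ_[p])‖ ≤ ε := by
      calc ‖((p * n : ℕ) : ℚ_[p])‖ * ‖(((n - 1).choose M : ℕ) : ℚ_[p])‖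
          ≤ ε * 1 := mul_le_mul hnormpn hnormchoose (norm_nonneg _) hε0
        _ = ε := mul_one ε
    exact mul_le_mul h1 hftail (norm_nonneg _) hε0
  refine le_trans hfinal ?_
  rw [hε, ← zpow_add₀ (by exact_mod_cast hppos.ne' : (p : ℝ) ≠ 0)]
  apply le_of_eq
  congr 1
  ring
end
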